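/- arXiv:2108.00757 — 3 statements merged into one kernel-verified Lean document; each statement's English description precedes it below -/
import Mathlib

section
/- Let G be a topological group, α: ℝ → Aut(G) a homomorphism, and suppose every ground state representation of (G,α) is strict. Then for any two ground state representations (π₁,H₁), (π₂,H₂) of (G,α) and any unitary G⁰-equivalence V: H₁⁰ → H₂⁰ between the minimal energy subspaces, there exists a unitary G-equivalence Ṽ: H₁ → H₂ extending V; moreover Ṽ is unique. -/
/-- The space of fixed vectors of a one-parameter group of operators; for a positive
energy representation `U_t = e^{itH₀}` this is the minimal energy subspace `ker H₀`. -/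
def fixedPts {H : Type*} [NormedAddCommGroup H] [InnerProductSpace ℂ H]
    (U : ℝ → H →L[ℂ] H) : Submodule ℂ H where
  carrier := {x | ∀ t : ℝ, U t x = x}
  add_mem' := fun ha hb t => by simp [map_add, ha t, hb t]
  zero_mem' := fun t => by simp
  smul_mem' := fun c x hx t => by simp [map_smul, hx t]

/-- A strongly continuous unitary one-parameter group `U_t = e^{itH₀}` has non-negative
generator `H₀ ≥ 0` iff `∫ f(t) ⟨x, U_t x⟩ dt = 0` for every integrable `f` whose Fourier
transform `f̂(s) = ∫ f(t) e^{ist} dt` vanishes on `[0,∞)`. -/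
def NonnegGen {H : Type*} [NormedAddCommGroup H] [InnerProductSpace ℂ H]
    (U : ℝ → H →L[ℂ] H) : Prop :=
  ∀ f : ℝ → ℂ, MeasureTheory.Integrable f →
    (∀ s : ℝ, 0 ≤ s → (∫ t : ℝ, f t * Complex.exp (Complex.I * (s * t))) = 0) →
    ∀ x : H, (∫ t : ℝ, f t * (inner ℂ x (U t x) : ℂ)) = 0

/-- A ground state representation of `(G,α)`: a unitary representation `π` of `G`
together with a strongly continuous unitary one-parameter group `U_t = e^{itH₀}` with
`H₀ ≥ 0`, satisfying the covariance relation `U_t π(g) = π(α_t g) U_t`, such that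
`π(G)·(ker H₀)` is total in `H` (here `ker H₀ = fixedPts U`). -/
def IsGroundStateRep {G : Type*} [Group G]
    {H : Type*} [NormedAddCommGroup H] [InnerProductSpace ℂ H] [CompleteSpace H]
    (α : ℝ → G → G) (π : G → H →L[ℂ] H) (U : ℝ → H →L[ℂ] H) : Prop :=
  π 1 = 1 ∧ (∀ g h : G, π (g * h) = π g * π h) ∧
  (∀ g : G, π g ∈ unitary (H →L[ℂ] H)) ∧
  U 0 = 1 ∧ (∀ s t : ℝ, U (s + t) = U s * U t) ∧
  (∀ t : ℝ, U t ∈ unitary (H →L[ℂ] H)) ∧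
  (∀ x : H, Continuous fun t : ℝ => U t x) ∧
  NonnegGen U ∧
  (∀ (t : ℝ) (g : G), U t * π g = π (α t g) * U t) ∧
  (Submodule.span ℂ
    {y : H | ∃ (g : G) (x : H), x ∈ fixedPts U ∧ y = π g x}).topologicalClosure = ⊤

/-- Strictness of a ground state representation: every operator on the minimal energy
space `H⁰ = fixedPts U` (encoded as the corresponding corner of `B(H)`) commuting with
the `G⁰`-action (`G⁰ = Fix α`) extends to an operator on `H` commuting with `π(G)`. -/
def IsStrict {G : Type*} [Group G]
    {H : Type*} [NormedAddCommGroup H] [InnerProductSpace ℂ H] [CompleteSpace H]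
    (α : ℝ → G → G) (π : G → H →L[ℂ] H) (U : ℝ → H →L[ℂ] H) : Prop :=
  ∀ B : H →L[ℂ] H,
    (∀ x : H, B x ∈ fixedPts U) →
    (∀ x ∈ (fixedPts U)ᗮ, B x = 0) →
    (∀ g : G, (∀ t : ℝ, α t g = g) → ∀ x ∈ fixedPts U, B (π g x) = π g (B x)) →
    ∃ A : H →L[ℂ] H,
      (∀ g : G, A * π g = π g * A) ∧ ∀ x ∈ fixedPts U, A x = B x


/-! ### Auxiliary material for the proof -/

section Aux

set_option linter.unusedSectionVars false

open ContinuousLinearMap MeasureTheory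
open scoped InnerProductSpace

variable {H₁ H₂ : Type*}
  [NormedAddCommGroup H₁] [InnerProductSpace ℂ H₁] [CompleteSpace H₁]
  [NormedAddCommGroup H₂] [InnerProductSpace ℂ H₂] [CompleteSpace H₂]

lemma mem_fixedPts {H : Type*} [NormedAddCommGroup H] [InnerProductSpace ℂ H]
    (U : ℝ → H →L[ℂ] H) (x : H) : x ∈ fixedPts U ↔ ∀ t : ℝ, U t x = x := Iff.rfl

lemma isClosed_fixedPts {H : Type*} [NormedAddCommGroup H] [InnerProductSpace ℂ H]
    (U : ℝ → H →L[ℂ] H) : IsClosed (fixedPts U : Set H) := by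
  have : (fixedPts U : Set H) = ⋂ t : ℝ, {x : H | U t x = x} := by
    ext x; simp [Set.mem_iInter, mem_fixedPts]
  rw [this]
  exact isClosed_iInter fun t => isClosed_eq (U t).continuous continuous_id

/-- conjugation of an operator on the product by the identification
`WithLp 2 (H₁ × H₂) ≃ H₁ × H₂`. -/
noncomputable def cj2 (m : H₁ × H₂ →L[ℂ] H₁ × H₂) :
    WithLp 2 (H₁ × H₂) →L[ℂ] WithLp 2 (H₁ × H₂) :=
  (((WithLp.prodContinuousLinearEquiv 2 ℂ H₁ H₂).symm.toContinuousLinearMap).comp m).comp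
    (WithLp.prodContinuousLinearEquiv 2 ℂ H₁ H₂).toContinuousLinearMap

/-- the direct sum of two operators, acting on `WithLp 2 (H₁ × H₂)`. -/
noncomputable def pmap (f : H₁ →L[ℂ] H₁) (g : H₂ →L[ℂ] H₂) :
    WithLp 2 (H₁ × H₂) →L[ℂ] WithLp 2 (H₁ × H₂) :=
  cj2 (f.prodMap g)

lemma pmap_fst (f : H₁ →L[ℂ] H₁) (g : H₂ →L[ℂ] H₂) (x : WithLp 2 (H₁ × H₂)) :
    (pmap f g x).fst = f x.fst := rfl

lemma pmap_snd (f : H₁ →L[ℂ] H₁) (g : H₂ →L[ℂ] H₂) (x : WithLp 2 (H₁ × H₂)) :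
    (pmap f g x).snd = g x.snd := rfl

lemma k2_ext {x y : WithLp 2 (H₁ × H₂)} (h1 : x.fst = y.fst) (h2 : x.snd = y.snd) :
    x = y := by
  apply (WithLp.prodContinuousLinearEquiv 2 ℂ H₁ H₂).injective
  exact Prod.ext h1 h2

lemma pmap_mul (f f' : H₁ →L[ℂ] H₁) (g g' : H₂ →L[ℂ] H₂) :
    pmap f g * pmap f' g' = pmap (f * f') (g * g') :=
  ContinuousLinearMap.ext fun _ => rfl

lemma pmap_one : pmap (1 : H₁ →L[ℂ] H₁) (1 : H₂ →L[ℂ] H₂) = 1 :=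
  ContinuousLinearMap.ext fun _ => rfl

lemma pmap_adjoint (f : H₁ →L[ℂ] H₁) (g : H₂ →L[ℂ] H₂) :
    ContinuousLinearMap.adjoint (pmap f g)
      = pmap (ContinuousLinearMap.adjoint f) (ContinuousLinearMap.adjoint g) := by
  refine ((ContinuousLinearMap.eq_adjoint_iff _ _).2 fun x y => ?_).symm
  show (inner ℂ (pmap (ContinuousLinearMap.adjoint f) (ContinuousLinearMap.adjoint g) x) y : ℂ)
    = inner ℂ x (pmap f g y)
  rw [WithLp.prod_inner_apply, WithLp.prod_inner_apply]
  simp only [WithLp.ofLp_fst, WithLp.ofLp_snd]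
  rw [pmap_fst, pmap_snd, pmap_fst, pmap_snd,
    ContinuousLinearMap.adjoint_inner_left, ContinuousLinearMap.adjoint_inner_left]

lemma pmap_star (f : H₁ →L[ℂ] H₁) (g : H₂ →L[ℂ] H₂) :
    star (pmap f g) = pmap (star f) (star g) := by
  rw [ContinuousLinearMap.star_eq_adjoint, ContinuousLinearMap.star_eq_adjoint,
    ContinuousLinearMap.star_eq_adjoint, pmap_adjoint]

lemma pmap_unitary {f : H₁ →L[ℂ] H₁} {g : H₂ →L[ℂ] H₂}
    (hf : f ∈ unitary (H₁ →L[ℂ] H₁)) (hg : g ∈ unitary (H₂ →L[ℂ] H₂)) :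
    pmap f g ∈ unitary (WithLp 2 (H₁ × H₂) →L[ℂ] WithLp 2 (H₁ × H₂)) := by
  rw [Unitary.mem_iff, pmap_star, pmap_mul, pmap_mul,
    Unitary.star_mul_self_of_mem hf, Unitary.star_mul_self_of_mem hg,
    Unitary.mul_star_self_of_mem hf, Unitary.mul_star_self_of_mem hg, pmap_one]
  exact ⟨rfl, rfl⟩

lemma mem_fixed_pmap (U₁ : ℝ → H₁ →L[ℂ] H₁) (U₂ : ℝ → H₂ →L[ℂ] H₂)
    (x : WithLp 2 (H₁ × H₂)) :
    x ∈ fixedPts (fun t => pmap (U₁ t) (U₂ t)) ↔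
      x.fst ∈ fixedPts U₁ ∧ x.snd ∈ fixedPts U₂ := by
  constructor
  · intro h
    exact ⟨fun t => congrArg WithLp.fst (h t), fun t => congrArg WithLp.snd (h t)⟩
  · intro h t
    exact k2_ext (h.1 t) (h.2 t)

/-- inclusion of the first factor. -/
noncomputable def inlK : H₁ →L[ℂ] WithLp 2 (H₁ × H₂) :=
  ((WithLp.prodContinuousLinearEquiv 2 ℂ H₁ H₂).symm.toContinuousLinearMap).comp
    (ContinuousLinearMap.inl ℂ H₁ H₂)

/-- inclusion of the second factor. -/
noncomputable def inrK : H₂ →L[ℂ] WithLp 2 (H₁ × H₂) :=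
  ((WithLp.prodContinuousLinearEquiv 2 ℂ H₁ H₂).symm.toContinuousLinearMap).comp
    (ContinuousLinearMap.inr ℂ H₁ H₂)

lemma inlK_fst (a : H₁) : ((inlK a : WithLp 2 (H₁ × H₂))).fst = a := rfl
lemma inlK_snd (a : H₁) : ((inlK a : WithLp 2 (H₁ × H₂))).snd = 0 := rfl
lemma inrK_fst (b : H₂) : ((inrK b : WithLp 2 (H₁ × H₂))).fst = 0 := rfl
lemma inrK_snd (b : H₂) : ((inrK b : WithLp 2 (H₁ × H₂))).snd = b := rfl

lemma norm_eq_of_inner_self_eq {E F : Type*} [NormedAddCommGroup E] [InnerProductSpace ℂ E]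
    [NormedAddCommGroup F] [InnerProductSpace ℂ F] {a : E} {b : F}
    (h : (inner ℂ a a : ℂ) = inner ℂ b b) : ‖a‖ = ‖b‖ := by
  have h2 : ‖a‖ ^ 2 = ‖b‖ ^ 2 := by
    rw [← inner_self_eq_norm_sq (𝕜 := ℂ), ← inner_self_eq_norm_sq (𝕜 := ℂ), h]
  rw [← Real.sqrt_sq (norm_nonneg a), ← Real.sqrt_sq (norm_nonneg b), h2]

/-- two continuous linear maps agreeing on `π(G)·(fixedPts U)` agree everywhere,
by totality. -/
lemma ext_on_total {G : Type*} [Group G] {H W : Type*}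
    [NormedAddCommGroup H] [InnerProductSpace ℂ H]
    [NormedAddCommGroup W] [NormedSpace ℂ W]
    (π : G → H →L[ℂ] H) (U : ℝ → H →L[ℂ] H)
    (htot : (Submodule.span ℂ
      {y : H | ∃ (g : G) (x : H), x ∈ fixedPts U ∧ y = π g x}).topologicalClosure = ⊤)
    (Φ Ψ : H →L[ℂ] W)
    (h : ∀ (g : G), ∀ x ∈ fixedPts U, Φ (π g x) = Ψ (π g x)) : Φ = Ψ := by
  have hsub : {y : H | ∃ (g : G) (x : H), x ∈ fixedPts U ∧ y = π g x}
      ⊆ (LinearMap.ker ((Φ - Ψ : H →L[ℂ] W) : H →ₗ[ℂ] W) : Set H) := by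
    rintro y ⟨g, x, hx, rfl⟩
    simp only [SetLike.mem_coe, LinearMap.mem_ker, ContinuousLinearMap.coe_coe,
      ContinuousLinearMap.coe_sub', Pi.sub_apply]
    rw [h g x hx, sub_self]
  have hle : (Submodule.span ℂ
      {y : H | ∃ (g : G) (x : H), x ∈ fixedPts U ∧ y = π g x}).topologicalClosure
      ≤ LinearMap.ker ((Φ - Ψ : H →L[ℂ] W) : H →ₗ[ℂ] W) :=
    Submodule.topologicalClosure_minimal _ (Submodule.span_le.2 hsub)
      (ContinuousLinearMap.isClosed_ker _)
  rw [htot] at hle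
  ext x
  have hx : x ∈ LinearMap.ker ((Φ - Ψ : H →L[ℂ] W) : H →ₗ[ℂ] W) := hle Submodule.mem_top
  rw [LinearMap.mem_ker] at hx
  have h0 : Φ x - Ψ x = 0 := hx
  exact sub_eq_zero.mp h0
  
/-- The "swap via `V`" operator `B(x₁,x₂) = (V⁻¹ P₂ x₂, V P₁ x₁)`. -/
noncomputable def Bop (U₁ : ℝ → H₁ →L[ℂ] H₁) (U₂ : ℝ → H₂ →L[ℂ] H₂)
    [Submodule.HasOrthogonalProjection (fixedPts U₁)] [Submodule.HasOrthogonalProjection (fixedPts U₂)]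
    (V : fixedPts U₁ ≃ₗᵢ[ℂ] fixedPts U₂) :
    WithLp 2 (H₁ × H₂) →L[ℂ] WithLp 2 (H₁ × H₂) :=
  cj2 (ContinuousLinearMap.prod
    ((fixedPts U₁).subtypeL.comp ((V.symm.toLinearIsometry.toContinuousLinearMap).comp
      ((Submodule.orthogonalProjectionOnto (fixedPts U₂)).comp (ContinuousLinearMap.snd ℂ H₁ H₂))))
    ((fixedPts U₂).subtypeL.comp ((V.toLinearIsometry.toContinuousLinearMap).comp
      ((Submodule.orthogonalProjectionOnto (fixedPts U₁)).comp (ContinuousLinearMap.fst ℂ H₁ H₂)))))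

lemma Bop_fst (U₁ : ℝ → H₁ →L[ℂ] H₁) (U₂ : ℝ → H₂ →L[ℂ] H₂)
    [Submodule.HasOrthogonalProjection (fixedPts U₁)] [Submodule.HasOrthogonalProjection (fixedPts U₂)]
    (V : fixedPts U₁ ≃ₗᵢ[ℂ] fixedPts U₂) (x : WithLp 2 (H₁ × H₂)) :
    (Bop U₁ U₂ V x).fst = (V.symm (Submodule.orthogonalProjectionOnto (fixedPts U₂) x.snd) : H₁) := rfl

lemma Bop_snd (U₁ : ℝ → H₁ →L[ℂ] H₁) (U₂ : ℝ → H₂ →L[ℂ] H₂)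
    [Submodule.HasOrthogonalProjection (fixedPts U₁)] [Submodule.HasOrthogonalProjection (fixedPts U₂)]
    (V : fixedPts U₁ ≃ₗᵢ[ℂ] fixedPts U₂) (x : WithLp 2 (H₁ × H₂)) :
    (Bop U₁ U₂ V x).snd = (V (Submodule.orthogonalProjectionOnto (fixedPts U₁) x.fst) : H₂) := rfl

end Aux

set_option maxHeartbeats 1600000

/-- **Strictness implies the unique extension property** (cf. Prop. 2.17).
Let `G` be a group with `ℝ`-action `α` and suppose that every ground state representation
of `(G,α)` is strict.  Then for any two ground state representations `(π₁,H₁)`, `(π₂,H₂)`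
of `(G,α)` and any unitary `G⁰`-equivalence `V : H₁⁰ → H₂⁰` of the minimal energy spaces,
there exists a unique unitary `G`-equivalence `Φ : H₁ → H₂` extending `V`. -/
theorem stmt_10 {G : Type u_1} [Group G] (α : ℝ → G → G)
    (hstrict : ∀ (K : Type u_2) [NormedAddCommGroup K] [InnerProductSpace ℂ K]
      [CompleteSpace K] (π : G → K →L[ℂ] K) (U : ℝ → K →L[ℂ] K),
      IsGroundStateRep α π U → IsStrict α π U)
    {H₁ H₂ : Type u_2}
    [NormedAddCommGroup H₁] [InnerProductSpace ℂ H₁] [CompleteSpace H₁]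
    [NormedAddCommGroup H₂] [InnerProductSpace ℂ H₂] [CompleteSpace H₂]
    (π₁ : G → H₁ →L[ℂ] H₁) (U₁ : ℝ → H₁ →L[ℂ] H₁)
    (π₂ : G → H₂ →L[ℂ] H₂) (U₂ : ℝ → H₂ →L[ℂ] H₂)
    (h₁ : IsGroundStateRep α π₁ U₁) (h₂ : IsGroundStateRep α π₂ U₂)
    -- a unitary `G⁰`-equivalence of the minimal energy spaces
    (V : (fixedPts U₁) ≃ₗᵢ[ℂ] (fixedPts U₂))
    (hV : ∀ g : G, (∀ t : ℝ, α t g = g) →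
      ∀ x y : fixedPts U₁, (y : H₁) = π₁ g (x : H₁) → (V y : H₂) = π₂ g (V x : H₂)) :
    ∃! Φ : H₁ →L[ℂ] H₂,
      (∀ x : H₁, ‖Φ x‖ = ‖x‖) ∧ Function.Surjective Φ ∧
      (∀ (g : G) (x : H₁), Φ (π₁ g x) = π₂ g (Φ x)) ∧
      (∀ x : fixedPts U₁, Φ (x : H₁) = (V x : H₂)) := by
  classical
  obtain ⟨hπ1one, hπ1mul, hπ1u, hU1zero, hU1add, hU1u, hU1cont, hU1nn, hcov1, htot1⟩ := h₁
  obtain ⟨hπ2one, hπ2mul, hπ2u, hU2zero, hU2add, hU2u, hU2cont, hU2nn, hcov2, htot2⟩ := h₂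
  haveI hop1 : Submodule.HasOrthogonalProjection (fixedPts U₁) := by
    haveI := (isClosed_fixedPts U₁).completeSpace_coe; infer_instance
  haveI hop2 : Submodule.HasOrthogonalProjection (fixedPts U₂) := by
    haveI := (isClosed_fixedPts U₂).completeSpace_coe; infer_instance
  -- the direct sum representation on `WithLp 2 (H₁ × H₂)`
  set πp : G → WithLp 2 (H₁ × H₂) →L[ℂ] WithLp 2 (H₁ × H₂) :=
    fun g => pmap (π₁ g) (π₂ g) with hπpdef
  set Up : ℝ → WithLp 2 (H₁ × H₂) →L[ℂ] WithLp 2 (H₁ × H₂) :=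
    fun t => pmap (U₁ t) (U₂ t) with hUpdef
  have hmemUp : ∀ x : WithLp 2 (H₁ × H₂),
      x ∈ fixedPts Up ↔ x.fst ∈ fixedPts U₁ ∧ x.snd ∈ fixedPts U₂ :=
    fun x => mem_fixed_pmap U₁ U₂ x
  -- pointwise covariance
  have hcov1' : ∀ (t : ℝ) (g : G) (x : H₁), U₁ t (π₁ g x) = π₁ (α t g) (U₁ t x) := fun t g x => by
    rw [← ContinuousLinearMap.mul_apply, hcov1 t g, ContinuousLinearMap.mul_apply]
  have hcov2' : ∀ (t : ℝ) (g : G) (x : H₂), U₂ t (π₂ g x) = π₂ (α t g) (U₂ t x) := fun t g x => by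
    rw [← ContinuousLinearMap.mul_apply, hcov2 t g, ContinuousLinearMap.mul_apply]
  -- fixed group elements preserve the minimal energy subspaces
  have hfix1 : ∀ g : G, (∀ t, α t g = g) → ∀ x ∈ fixedPts U₁, π₁ g x ∈ fixedPts U₁ := by
    intro g hg x hx
    have hx' : ∀ t : ℝ, U₁ t x = x := hx
    exact fun t => by rw [hcov1' t g x, hg t, hx' t]
  have hfix2 : ∀ g : G, (∀ t, α t g = g) → ∀ x ∈ fixedPts U₂, π₂ g x ∈ fixedPts U₂ := by
    intro g hg x hx
    have hx' : ∀ t : ℝ, U₂ t x = x := hx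
    exact fun t => by rw [hcov2' t g x, hg t, hx' t]
  -- the ground state representation structure on the direct sum
  have hπpone : πp (1 : G) = 1 := by
    show pmap (π₁ 1) (π₂ 1) = 1; rw [hπ1one, hπ2one, pmap_one]
  have hπpmul : ∀ g h : G, πp (g * h) = πp g * πp h := by
    intro g h
    show pmap (π₁ (g * h)) (π₂ (g * h)) = pmap (π₁ g) (π₂ g) * pmap (π₁ h) (π₂ h)
    rw [hπ1mul, hπ2mul, pmap_mul]
  have hπpu : ∀ g : G, πp g ∈ unitary (WithLp 2 (H₁ × H₂) →L[ℂ] WithLp 2 (H₁ × H₂)) :=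
    fun g => pmap_unitary (hπ1u g) (hπ2u g)
  have hUpzero : Up 0 = 1 := by
    show pmap (U₁ 0) (U₂ 0) = 1; rw [hU1zero, hU2zero, pmap_one]
  have hUpadd : ∀ s t : ℝ, Up (s + t) = Up s * Up t := by
    intro s t
    show pmap (U₁ (s + t)) (U₂ (s + t)) = pmap (U₁ s) (U₂ s) * pmap (U₁ t) (U₂ t)
    rw [hU1add, hU2add, pmap_mul]
  have hUpu : ∀ t : ℝ, Up t ∈ unitary (WithLp 2 (H₁ × H₂) →L[ℂ] WithLp 2 (H₁ × H₂)) :=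
    fun t => pmap_unitary (hU1u t) (hU2u t)
  have hUpcont : ∀ x : WithLp 2 (H₁ × H₂), Continuous fun t : ℝ => Up t x := by
    intro x
    have : (fun t : ℝ => Up t x)
        = fun t : ℝ => (WithLp.prodContinuousLinearEquiv 2 ℂ H₁ H₂).symm
            (U₁ t x.fst, U₂ t x.snd) := rfl
    rw [this]
    exact (WithLp.prodContinuousLinearEquiv 2 ℂ H₁ H₂).symm.continuous.comp
      (Continuous.prodMk (hU1cont x.fst) (hU2cont x.snd))
  have hUpnn : NonnegGen Up := by
    intro f hf hhat x
    have hc1 : Continuous fun t : ℝ => (inner ℂ x.fst (U₁ t x.fst) : ℂ) :=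
      Continuous.inner continuous_const (hU1cont x.fst)
    have hc2 : Continuous fun t : ℝ => (inner ℂ x.snd (U₂ t x.snd) : ℂ) :=
      Continuous.inner continuous_const (hU2cont x.snd)
    have hb1 : ∀ t : ℝ, ‖(inner ℂ x.fst (U₁ t x.fst) : ℂ)‖ ≤ ‖x.fst‖ * ‖x.fst‖ := by
      intro t
      calc ‖(inner ℂ x.fst (U₁ t x.fst) : ℂ)‖ ≤ ‖x.fst‖ * ‖U₁ t x.fst‖ := norm_inner_le_norm _ _
      _ = ‖x.fst‖ * ‖x.fst‖ := by rw [ContinuousLinearMap.norm_map_of_mem_unitary (hU1u t)]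
    have hb2 : ∀ t : ℝ, ‖(inner ℂ x.snd (U₂ t x.snd) : ℂ)‖ ≤ ‖x.snd‖ * ‖x.snd‖ := by
      intro t
      calc ‖(inner ℂ x.snd (U₂ t x.snd) : ℂ)‖ ≤ ‖x.snd‖ * ‖U₂ t x.snd‖ := norm_inner_le_norm _ _
      _ = ‖x.snd‖ * ‖x.snd‖ := by rw [ContinuousLinearMap.norm_map_of_mem_unitary (hU2u t)]
    have hi1 : MeasureTheory.Integrable fun t : ℝ => (inner ℂ x.fst (U₁ t x.fst) : ℂ) * f t :=
      hf.bdd_mul hc1.aestronglyMeasurable (Filter.Eventually.of_forall hb1)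
    have hi2 : MeasureTheory.Integrable fun t : ℝ => (inner ℂ x.snd (U₂ t x.snd) : ℂ) * f t :=
      hf.bdd_mul hc2.aestronglyMeasurable (Filter.Eventually.of_forall hb2)
    have hi1' : MeasureTheory.Integrable fun t : ℝ => f t * (inner ℂ x.fst (U₁ t x.fst) : ℂ) := by
      simpa [mul_comm] using hi1
    have hi2' : MeasureTheory.Integrable fun t : ℝ => f t * (inner ℂ x.snd (U₂ t x.snd) : ℂ) := by
      simpa [mul_comm] using hi2
    have hsplit : (fun t : ℝ => f t * (inner ℂ x (Up t x) : ℂ))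
        = fun t : ℝ => f t * (inner ℂ x.fst (U₁ t x.fst) : ℂ)
            + f t * (inner ℂ x.snd (U₂ t x.snd) : ℂ) := by
      funext t
      rw [show (inner ℂ x (Up t x) : ℂ)
          = inner ℂ x.fst (U₁ t x.fst) + inner ℂ x.snd (U₂ t x.snd) from rfl, mul_add]
    rw [hsplit, MeasureTheory.integral_add hi1' hi2', hU1nn f hf hhat x.fst,
      hU2nn f hf hhat x.snd, add_zero]
  have hcovp : ∀ (t : ℝ) (g : G), Up t * πp g = πp (α t g) * Up t := by
    intro t g
    show pmap (U₁ t) (U₂ t) * pmap (π₁ g) (π₂ g)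
      = pmap (π₁ (α t g)) (π₂ (α t g)) * pmap (U₁ t) (U₂ t)
    rw [pmap_mul, pmap_mul, hcov1 t g, hcov2 t g]
  have htotp : (Submodule.span ℂ
      {y : WithLp 2 (H₁ × H₂) | ∃ (g : G) (x : WithLp 2 (H₁ × H₂)),
        x ∈ fixedPts Up ∧ y = πp g x}).topologicalClosure = ⊤ := by
    set Sp := {y : WithLp 2 (H₁ × H₂) | ∃ (g : G) (x : WithLp 2 (H₁ × H₂)),
      x ∈ fixedPts Up ∧ y = πp g x} with hSp
    rw [eq_top_iff]
    intro z _
    have h1 : ∀ a : H₁, (inlK a : WithLp 2 (H₁ × H₂))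
        ∈ (Submodule.span ℂ Sp).topologicalClosure := by
      intro a
      have hNclosed : IsClosed (((Submodule.span ℂ Sp).topologicalClosure.comap
          ((inlK : H₁ →L[ℂ] WithLp 2 (H₁ × H₂)) : H₁ →ₗ[ℂ] WithLp 2 (H₁ × H₂))) : Set H₁) :=
        (Submodule.isClosed_topologicalClosure _).preimage
          (inlK : H₁ →L[ℂ] WithLp 2 (H₁ × H₂)).continuous
      have hsub : {y : H₁ | ∃ (g : G) (x : H₁), x ∈ fixedPts U₁ ∧ y = π₁ g x}
          ⊆ (((Submodule.span ℂ Sp).topologicalClosure.comap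
          ((inlK : H₁ →L[ℂ] WithLp 2 (H₁ × H₂)) : H₁ →ₗ[ℂ] WithLp 2 (H₁ × H₂))) : Set H₁) := by
        rintro y ⟨g, ξ, hξ, rfl⟩
        have hmem : (inlK ξ : WithLp 2 (H₁ × H₂)) ∈ fixedPts Up :=
          (hmemUp _).2 ⟨hξ, (fixedPts U₂).zero_mem⟩
        have heq : (inlK (π₁ g ξ) : WithLp 2 (H₁ × H₂)) = πp g (inlK ξ) :=
          k2_ext rfl (by show (0 : H₂) = π₂ g (0 : H₂); rw [map_zero])
        show (inlK (π₁ g ξ) : WithLp 2 (H₁ × H₂)) ∈ (Submodule.span ℂ Sp).topologicalClosure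
        rw [heq]
        exact Submodule.le_topologicalClosure _
          (Submodule.subset_span ⟨g, inlK ξ, hmem, rfl⟩)
      have hspan := Submodule.topologicalClosure_minimal _ (Submodule.span_le.2 hsub) hNclosed
      rw [htot1] at hspan
      exact hspan Submodule.mem_top
    have h2 : ∀ b : H₂, (inrK b : WithLp 2 (H₁ × H₂))
        ∈ (Submodule.span ℂ Sp).topologicalClosure := by
      intro b
      have hNclosed : IsClosed (((Submodule.span ℂ Sp).topologicalClosure.comap
          ((inrK : H₂ →L[ℂ] WithLp 2 (H₁ × H₂)) : H₂ →ₗ[ℂ] WithLp 2 (H₁ × H₂))) : Set H₂) :=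
        (Submodule.isClosed_topologicalClosure _).preimage
          (inrK : H₂ →L[ℂ] WithLp 2 (H₁ × H₂)).continuous
      have hsub : {y : H₂ | ∃ (g : G) (x : H₂), x ∈ fixedPts U₂ ∧ y = π₂ g x}
          ⊆ (((Submodule.span ℂ Sp).topologicalClosure.comap
          ((inrK : H₂ →L[ℂ] WithLp 2 (H₁ × H₂)) : H₂ →ₗ[ℂ] WithLp 2 (H₁ × H₂))) : Set H₂) := by
        rintro y ⟨g, ξ, hξ, rfl⟩
        have hmem : (inrK ξ : WithLp 2 (H₁ × H₂)) ∈ fixedPts Up :=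
          (hmemUp _).2 ⟨(fixedPts U₁).zero_mem, hξ⟩
        have heq : (inrK (π₂ g ξ) : WithLp 2 (H₁ × H₂)) = πp g (inrK ξ) :=
          k2_ext (by show (0 : H₁) = π₁ g (0 : H₁); rw [map_zero]) rfl
        show (inrK (π₂ g ξ) : WithLp 2 (H₁ × H₂)) ∈ (Submodule.span ℂ Sp).topologicalClosure
        rw [heq]
        exact Submodule.le_topologicalClosure _
          (Submodule.subset_span ⟨g, inrK ξ, hmem, rfl⟩)
      have hspan := Submodule.topologicalClosure_minimal _ (Submodule.span_le.2 hsub) hNclosed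
      rw [htot2] at hspan
      exact hspan Submodule.mem_top
    have hz : z = inlK z.fst + inrK z.snd :=
      k2_ext (by show z.fst = z.fst + 0; rw [add_zero]) (by show z.snd = 0 + z.snd; rw [zero_add])
    rw [hz]
    exact Submodule.add_mem _ (h1 z.fst) (h2 z.snd)
  have hGS : IsGroundStateRep α πp Up :=
    ⟨hπpone, hπpmul, hπpu, hUpzero, hUpadd, hUpu, hUpcont, hUpnn, hcovp, htotp⟩
  -- the operator B
  set B : WithLp 2 (H₁ × H₂) →L[ℂ] WithLp 2 (H₁ × H₂) := Bop U₁ U₂ V with hBdef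
  have hBfst : ∀ x : WithLp 2 (H₁ × H₂),
      (B x).fst = (V.symm (Submodule.orthogonalProjectionOnto (fixedPts U₂) x.snd) : H₁) :=
    fun x => Bop_fst U₁ U₂ V x
  have hBsnd : ∀ x : WithLp 2 (H₁ × H₂),
      (B x).snd = (V (Submodule.orthogonalProjectionOnto (fixedPts U₁) x.fst) : H₂) :=
    fun x => Bop_snd U₁ U₂ V x
  have hBmem : ∀ x : WithLp 2 (H₁ × H₂), B x ∈ fixedPts Up := by
    intro x
    rw [hmemUp]
    constructor
    · rw [hBfst x]; exact (V.symm (Submodule.orthogonalProjectionOnto (fixedPts U₂) x.snd)).2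
    · rw [hBsnd x]; exact (V (Submodule.orthogonalProjectionOnto (fixedPts U₁) x.fst)).2
  have hBorth : ∀ x ∈ (fixedPts Up)ᗮ, B x = 0 := by
    intro x hx
    have hx' := (Submodule.mem_orthogonal _ x).1 hx
    have hx1 : x.fst ∈ (fixedPts U₁)ᗮ := by
      rw [Submodule.mem_orthogonal]
      intro u hu
      have hm : (inlK u : WithLp 2 (H₁ × H₂)) ∈ fixedPts Up :=
        (hmemUp _).2 ⟨hu, (fixedPts U₂).zero_mem⟩
      have h0 := hx' _ hm
      rw [WithLp.prod_inner_apply] at h0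
      have h0' : (inner ℂ u x.fst : ℂ) + inner ℂ (0 : H₂) x.snd = 0 := h0
      simpa using h0'
    have hx2 : x.snd ∈ (fixedPts U₂)ᗮ := by
      rw [Submodule.mem_orthogonal]
      intro u hu
      have hm : (inrK u : WithLp 2 (H₁ × H₂)) ∈ fixedPts Up :=
        (hmemUp _).2 ⟨(fixedPts U₁).zero_mem, hu⟩
      have h0 := hx' _ hm
      rw [WithLp.prod_inner_apply] at h0
      have h0' : (inner ℂ (0 : H₁) x.fst : ℂ) + inner ℂ u x.snd = 0 := h0
      simpa using h0'
    apply k2_ext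
    · show ((V.symm (Submodule.orthogonalProjectionOnto (fixedPts U₂) x.snd) : fixedPts U₁) : H₁) = (0 : H₁)
      rw [Submodule.orthogonalProjectionOnto_apply_of_mem_orthogonal hx2, map_zero,
        Submodule.coe_zero]
    · show ((V (Submodule.orthogonalProjectionOnto (fixedPts U₁) x.fst) : fixedPts U₂) : H₂) = (0 : H₂)
      rw [Submodule.orthogonalProjectionOnto_apply_of_mem_orthogonal hx1, map_zero,
        Submodule.coe_zero]
  have hBcomm : ∀ g : G, (∀ t : ℝ, α t g = g) → ∀ x ∈ fixedPts Up, B (πp g x) = πp g (B x) := by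
    intro g hg x hx
    obtain ⟨hx1, hx2⟩ := (hmemUp x).1 hx
    have hq1 : Submodule.orthogonalProjectionOnto (fixedPts U₁) x.fst = ⟨x.fst, hx1⟩ :=
      Subtype.ext ((Submodule.starProjection_eq_self_iff (K := fixedPts U₁)).2 hx1)
    have hq2 : Submodule.orthogonalProjectionOnto (fixedPts U₂) x.snd = ⟨x.snd, hx2⟩ :=
      Subtype.ext ((Submodule.starProjection_eq_self_iff (K := fixedPts U₂)).2 hx2)
    have hp1 : Submodule.orthogonalProjectionOnto (fixedPts U₁) (π₁ g x.fst)
        = ⟨π₁ g x.fst, hfix1 g hg x.fst hx1⟩ :=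
      Subtype.ext ((Submodule.starProjection_eq_self_iff (K := fixedPts U₁)).2 (hfix1 g hg x.fst hx1))
    have hp2 : Submodule.orthogonalProjectionOnto (fixedPts U₂) (π₂ g x.snd)
        = ⟨π₂ g x.snd, hfix2 g hg x.snd hx2⟩ :=
      Subtype.ext ((Submodule.starProjection_eq_self_iff (K := fixedPts U₂)).2 (hfix2 g hg x.snd hx2))
    have hVg : (V ⟨π₁ g x.fst, hfix1 g hg x.fst hx1⟩ : H₂) = π₂ g (V ⟨x.fst, hx1⟩ : H₂) :=
      hV g hg ⟨x.fst, hx1⟩ ⟨π₁ g x.fst, hfix1 g hg x.fst hx1⟩ rfl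
    have hVg' : (V.symm ⟨π₂ g x.snd, hfix2 g hg x.snd hx2⟩ : H₁)
        = π₁ g (V.symm ⟨x.snd, hx2⟩ : H₁) := by
      set w : fixedPts U₁ := ⟨π₁ g ((V.symm ⟨x.snd, hx2⟩ : fixedPts U₁) : H₁),
        hfix1 g hg _ (V.symm ⟨x.snd, hx2⟩).2⟩ with hw
      have h1 : (V w : H₂) = π₂ g ((V (V.symm ⟨x.snd, hx2⟩)) : H₂) :=
        hV g hg (V.symm ⟨x.snd, hx2⟩) w rfl
      rw [V.apply_symm_apply] at h1
      have h2 : V w = ⟨π₂ g x.snd, hfix2 g hg x.snd hx2⟩ := Subtype.ext h1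
      have h3 : w = V.symm ⟨π₂ g x.snd, hfix2 g hg x.snd hx2⟩ := by
        rw [← h2, V.symm_apply_apply]
      rw [← h3]
    apply k2_ext
    · show ((V.symm (Submodule.orthogonalProjectionOnto (fixedPts U₂) (π₂ g x.snd)) : fixedPts U₁) : H₁)
        = π₁ g ((V.symm (Submodule.orthogonalProjectionOnto (fixedPts U₂) x.snd) : fixedPts U₁) : H₁)
      rw [hp2, hq2, hVg']
    · show ((V (Submodule.orthogonalProjectionOnto (fixedPts U₁) (π₁ g x.fst)) : fixedPts U₂) : H₂)
        = π₂ g ((V (Submodule.orthogonalProjectionOnto (fixedPts U₁) x.fst) : fixedPts U₂) : H₂)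
      rw [hp1, hq1, hVg]
  -- apply strictness
  obtain ⟨A, hAcomm, hAB⟩ :=
    hstrict (WithLp 2 (H₁ × H₂)) πp Up hGS B hBmem hBorth hBcomm
  -- the uniqueness-of-extension principle
  have key : ∀ C : WithLp 2 (H₁ × H₂) →L[ℂ] WithLp 2 (H₁ × H₂),
      (∀ g : G, C * πp g = πp g * C) → (∀ x ∈ fixedPts Up, C x = 0) → C = 0 := by
    intro C hc hv
    refine ext_on_total πp Up htotp C 0 ?_
    intro g x hx
    rw [ContinuousLinearMap.zero_apply, ← ContinuousLinearMap.mul_apply, hc g,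
      ContinuousLinearMap.mul_apply, hv x hx, map_zero]
  have hAcomm' : ∀ (g : G) (z : WithLp 2 (H₁ × H₂)), A (πp g z) = πp g (A z) := fun g z => by
    rw [← ContinuousLinearMap.mul_apply, hAcomm g, ContinuousLinearMap.mul_apply]
  have psub : ∀ C D : WithLp 2 (H₁ × H₂) →L[ℂ] WithLp 2 (H₁ × H₂),
      (∀ (g : G) (z : WithLp 2 (H₁ × H₂)), C (πp g z) = πp g (C z)) →
      (∀ (g : G) (z : WithLp 2 (H₁ × H₂)), D (πp g z) = πp g (D z)) →
      ∀ g : G, (C - D) * πp g = πp g * (C - D) := by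
    intro C D hC hD g
    refine ContinuousLinearMap.ext fun w => ?_
    simp only [ContinuousLinearMap.mul_apply, ContinuousLinearMap.sub_apply]
    rw [hC g w, hD g w, map_sub]
  -- the one-parameter group facts
  have hUpcancel : ∀ (t : ℝ) (w : WithLp 2 (H₁ × H₂)), Up t (Up (-t) w) = w := by
    intro t w
    rw [← ContinuousLinearMap.mul_apply, ← hUpadd, add_neg_cancel, hUpzero,
      ContinuousLinearMap.one_apply]
  have hUpcancel' : ∀ (t : ℝ) (w : WithLp 2 (H₁ × H₂)), Up (-t) (Up t w) = w := by
    intro t w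
    rw [← ContinuousLinearMap.mul_apply, ← hUpadd, neg_add_cancel, hUpzero,
      ContinuousLinearMap.one_apply]
  have hUpinv : ∀ t : ℝ, Up t * Up (-t) = 1 := fun t => by
    rw [← hUpadd, add_neg_cancel, hUpzero]
  have star_unique : ∀ u v : WithLp 2 (H₁ × H₂) →L[ℂ] WithLp 2 (H₁ × H₂),
      u ∈ unitary (WithLp 2 (H₁ × H₂) →L[ℂ] WithLp 2 (H₁ × H₂)) → u * v = 1 → star u = v := by
    intro u v hu h1
    calc star u = star u * (u * v) := by rw [h1, mul_one]
    _ = (star u * u) * v := by rw [mul_assoc]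
    _ = v := by rw [Unitary.star_mul_self_of_mem hu, one_mul]
  have hstarU : ∀ t : ℝ, star (Up t) = Up (-t) :=
    fun t => star_unique _ _ (hUpu t) (hUpinv t)
  have hstarπ : ∀ g : G, star (πp g) = πp g⁻¹ :=
    fun g => star_unique _ _ (hπpu g) (by rw [← hπpmul, mul_inv_cancel, hπpone])
  have hcovp' : ∀ (t : ℝ) (g : G) (z : WithLp 2 (H₁ × H₂)),
      Up t (πp g z) = πp (α t g) (Up t z) := fun t g z => by
    rw [← ContinuousLinearMap.mul_apply, hcovp t g, ContinuousLinearMap.mul_apply]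
  have hcovp'' : ∀ (t : ℝ) (g : G) (z : WithLp 2 (H₁ × H₂)),
      Up (-t) (πp (α t g) z) = πp g (Up (-t) z) := by
    intro t g z
    have h1 := hcovp' t g (Up (-t) z)
    rw [hUpcancel t z] at h1
    calc Up (-t) (πp (α t g) z) = Up (-t) (Up t (πp g (Up (-t) z))) := by rw [h1]
    _ = πp g (Up (-t) z) := hUpcancel' t _
  -- A commutes with the one-parameter group
  have hAU : ∀ (t : ℝ) (z : WithLp 2 (H₁ × H₂)), A (Up t z) = Up t (A z) := by
    intro t z
    have hC : (Up (-t)).comp (A.comp (Up t)) - A = 0 := by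
      apply key
      · refine psub _ _ ?_ hAcomm'
        intro g w
        simp only [ContinuousLinearMap.comp_apply]
        rw [hcovp' t g w, hAcomm' (α t g), hcovp'' t g]
      · intro x hx
        have hx' : ∀ s : ℝ, Up s x = x := hx
        have hBx' : ∀ s : ℝ, Up s (B x) = B x := hBmem x
        simp only [ContinuousLinearMap.sub_apply, ContinuousLinearMap.comp_apply]
        rw [hx' t, hAB x hx, hBx' (-t), sub_self]
    have h2 : Up (-t) (A (Up t z)) = A z := by
      have h3 := ContinuousLinearMap.ext_iff.1 (sub_eq_zero.1 hC) z
      simpa only [ContinuousLinearMap.comp_apply] using h3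
    calc A (Up t z) = Up t (Up (-t) (A (Up t z))) := (hUpcancel t _).symm
    _ = Up t (A z) := by rw [h2]
  have hAUop : ∀ t : ℝ, A * Up t = Up t * A := fun t =>
    ContinuousLinearMap.ext fun z => by
      rw [ContinuousLinearMap.mul_apply, ContinuousLinearMap.mul_apply, hAU t z]
  -- the adjoint of A
  have hAcommStar : ∀ g : G, star A * πp g = πp g * star A := by
    intro g
    have h1 := congrArg star (hAcomm g⁻¹)
    rw [star_mul, star_mul, hstarπ, inv_inv] at h1
    exact h1.symm
  have hAcommStar' : ∀ (g : G) (z : WithLp 2 (H₁ × H₂)),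
      star A (πp g z) = πp g (star A z) := fun g z => by
    rw [← ContinuousLinearMap.mul_apply, hAcommStar g, ContinuousLinearMap.mul_apply]
  have hAstarU : ∀ (t : ℝ) (z : WithLp 2 (H₁ × H₂)), star A (Up t z) = Up t (star A z) := by
    intro t z
    have h1 := congrArg star (hAUop (-t))
    rw [star_mul, star_mul, hstarU, neg_neg] at h1
    rw [← ContinuousLinearMap.mul_apply, ← h1, ContinuousLinearMap.mul_apply]
  have hAstarfix : ∀ x ∈ fixedPts Up, star A x ∈ fixedPts Up := by
    intro x hx
    have hx' : ∀ t : ℝ, Up t x = x := hx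
    exact fun t => by rw [← hAstarU t x, hx' t]
  -- B is symmetric on the minimal energy subspace
  have hBsym : ∀ x ∈ fixedPts Up, ∀ y ∈ fixedPts Up,
      (inner ℂ x (B y) : ℂ) = inner ℂ (B x) y := by
    intro x hx y hy
    obtain ⟨hx1, hx2⟩ := (hmemUp x).1 hx
    obtain ⟨hy1, hy2⟩ := (hmemUp y).1 hy
    have hq1 : Submodule.orthogonalProjectionOnto (fixedPts U₁) x.fst = ⟨x.fst, hx1⟩ :=
      Subtype.ext ((Submodule.starProjection_eq_self_iff (K := fixedPts U₁)).2 hx1)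
    have hq2 : Submodule.orthogonalProjectionOnto (fixedPts U₂) x.snd = ⟨x.snd, hx2⟩ :=
      Subtype.ext ((Submodule.starProjection_eq_self_iff (K := fixedPts U₂)).2 hx2)
    have hr1 : Submodule.orthogonalProjectionOnto (fixedPts U₁) y.fst = ⟨y.fst, hy1⟩ :=
      Subtype.ext ((Submodule.starProjection_eq_self_iff (K := fixedPts U₁)).2 hy1)
    have hr2 : Submodule.orthogonalProjectionOnto (fixedPts U₂) y.snd = ⟨y.snd, hy2⟩ :=
      Subtype.ext ((Submodule.starProjection_eq_self_iff (K := fixedPts U₂)).2 hy2)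
    rw [WithLp.prod_inner_apply, WithLp.prod_inner_apply]
    simp only [WithLp.ofLp_fst, WithLp.ofLp_snd]
    rw [hBfst, hBsnd, hBfst, hBsnd,
      hq1, hq2, hr1, hr2]
    have e1 : (inner ℂ x.fst ((V.symm ⟨y.snd, hy2⟩ : fixedPts U₁) : H₁) : ℂ)
        = inner ℂ ((V ⟨x.fst, hx1⟩ : fixedPts U₂) : H₂) y.snd := by
      calc (inner ℂ x.fst ((V.symm ⟨y.snd, hy2⟩ : fixedPts U₁) : H₁) : ℂ)
          = inner ℂ (⟨x.fst, hx1⟩ : fixedPts U₁) (V.symm ⟨y.snd, hy2⟩) :=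
        (Submodule.coe_inner (fixedPts U₁) ⟨x.fst, hx1⟩ (V.symm ⟨y.snd, hy2⟩)).symm
      _ = inner ℂ (V ⟨x.fst, hx1⟩) (V (V.symm ⟨y.snd, hy2⟩)) := (V.inner_map_map _ _).symm
      _ = inner ℂ (V ⟨x.fst, hx1⟩) (⟨y.snd, hy2⟩ : fixedPts U₂) := by rw [V.apply_symm_apply]
      _ = inner ℂ ((V ⟨x.fst, hx1⟩ : fixedPts U₂) : H₂) y.snd :=
        Submodule.coe_inner (fixedPts U₂) (V ⟨x.fst, hx1⟩) ⟨y.snd, hy2⟩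
    have e2 : (inner ℂ x.snd ((V ⟨y.fst, hy1⟩ : fixedPts U₂) : H₂) : ℂ)
        = inner ℂ ((V.symm ⟨x.snd, hx2⟩ : fixedPts U₁) : H₁) y.fst := by
      calc (inner ℂ x.snd ((V ⟨y.fst, hy1⟩ : fixedPts U₂) : H₂) : ℂ)
          = inner ℂ (⟨x.snd, hx2⟩ : fixedPts U₂) (V ⟨y.fst, hy1⟩) :=
        (Submodule.coe_inner (fixedPts U₂) ⟨x.snd, hx2⟩ (V ⟨y.fst, hy1⟩)).symm
      _ = inner ℂ (V.symm ⟨x.snd, hx2⟩) (V.symm (V ⟨y.fst, hy1⟩)) :=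
        (V.symm.inner_map_map _ _).symm
      _ = inner ℂ (V.symm ⟨x.snd, hx2⟩) (⟨y.fst, hy1⟩ : fixedPts U₁) := by
        rw [V.symm_apply_apply]
      _ = inner ℂ ((V.symm ⟨x.snd, hx2⟩ : fixedPts U₁) : H₁) y.fst :=
        Submodule.coe_inner (fixedPts U₁) (V.symm ⟨x.snd, hx2⟩) ⟨y.fst, hy1⟩
    rw [e1, e2, add_comm]
  -- the adjoint of A also extends B, hence A is self-adjoint
  have hAstarB : ∀ x ∈ fixedPts Up, star A x = B x := by
    intro ξ hξ
    have hzfix : star A ξ - B ξ ∈ fixedPts Up :=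
      Submodule.sub_mem _ (hAstarfix ξ hξ) (hBmem ξ)
    have h1 : (inner ℂ (star A ξ) (star A ξ - B ξ) : ℂ) = inner ℂ ξ (A (star A ξ - B ξ)) := by
      rw [ContinuousLinearMap.star_eq_adjoint]
      exact ContinuousLinearMap.adjoint_inner_left A (star A ξ - B ξ) ξ
    have hznn : (inner ℂ (star A ξ - B ξ) (star A ξ - B ξ) : ℂ) = 0 := by
      rw [inner_sub_left, h1, hAB _ hzfix, hBsym ξ hξ _ hzfix, sub_self]
    exact sub_eq_zero.1 (inner_self_eq_zero.1 hznn)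
  have hAsa : star A = A := by
    have h0 : star A - A = 0 := by
      apply key
      · exact psub _ _ hAcommStar' hAcomm'
      · intro x hx
        rw [ContinuousLinearMap.sub_apply, hAstarB x hx, hAB x hx, sub_self]
    exact sub_eq_zero.1 h0
  -- A is an involution
  have hBB : ∀ x ∈ fixedPts Up, B (B x) = x := by
    intro x hx
    obtain ⟨hx1, hx2⟩ := (hmemUp x).1 hx
    have hq1 : Submodule.orthogonalProjectionOnto (fixedPts U₁) x.fst = ⟨x.fst, hx1⟩ :=
      Subtype.ext ((Submodule.starProjection_eq_self_iff (K := fixedPts U₁)).2 hx1)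
    have hq2 : Submodule.orthogonalProjectionOnto (fixedPts U₂) x.snd = ⟨x.snd, hx2⟩ :=
      Subtype.ext ((Submodule.starProjection_eq_self_iff (K := fixedPts U₂)).2 hx2)
    apply k2_ext
    · show ((V.symm (Submodule.orthogonalProjectionOnto (fixedPts U₂) ((B x).snd)) : fixedPts U₁) : H₁) = x.fst
      rw [hBsnd, hq1, Submodule.orthogonalProjectionOnto_mem_subspace_eq_self, V.symm_apply_apply]
    · show ((V (Submodule.orthogonalProjectionOnto (fixedPts U₁) ((B x).fst)) : fixedPts U₂) : H₂) = x.snd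
      rw [hBfst, hq2, Submodule.orthogonalProjectionOnto_mem_subspace_eq_self, V.apply_symm_apply]
  have hAA : ∀ z : WithLp 2 (H₁ × H₂), A (A z) = z := by
    have h0 : A.comp A - 1 = 0 := by
      apply key
      · refine psub _ _ ?_ ?_
        · intro g z
          simp only [ContinuousLinearMap.comp_apply]
          rw [hAcomm' g, hAcomm' g]
        · intro g z
          simp only [ContinuousLinearMap.one_apply]
      · intro x hx
        rw [ContinuousLinearMap.sub_apply, ContinuousLinearMap.comp_apply,
          ContinuousLinearMap.one_apply, hAB x hx, hAB _ (hBmem x), hBB x hx, sub_self]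
    intro z
    have h1 := ContinuousLinearMap.ext_iff.1 (sub_eq_zero.1 h0) z
    simpa only [ContinuousLinearMap.comp_apply, ContinuousLinearMap.one_apply] using h1
  have hAinner : ∀ z : WithLp 2 (H₁ × H₂), (inner ℂ (A z) (A z) : ℂ) = inner ℂ z z := by
    intro z
    have h1 : (inner ℂ ((ContinuousLinearMap.adjoint A) (A z)) z : ℂ) = inner ℂ (A z) (A z) :=
      ContinuousLinearMap.adjoint_inner_left A z (A z)
    rw [← ContinuousLinearMap.star_eq_adjoint, hAsa, hAA z] at h1
    exact h1.symm
  -- A is off-diagonal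
  have hEπ1 : ∀ (g : G) (w : WithLp 2 (H₁ × H₂)),
      pmap (1 : H₁ →L[ℂ] H₁) (0 : H₂ →L[ℂ] H₂) (πp g w)
        = πp g (pmap (1 : H₁ →L[ℂ] H₁) (0 : H₂ →L[ℂ] H₂) w) :=
    fun g w => k2_ext rfl (by show (0 : H₂) = π₂ g (0 : H₂); rw [map_zero])
  have hEπ2 : ∀ (g : G) (w : WithLp 2 (H₁ × H₂)),
      pmap (0 : H₁ →L[ℂ] H₁) (1 : H₂ →L[ℂ] H₂) (πp g w)
        = πp g (pmap (0 : H₁ →L[ℂ] H₁) (1 : H₂ →L[ℂ] H₂) w) :=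
    fun g w => k2_ext (by show (0 : H₁) = π₁ g (0 : H₁); rw [map_zero]) rfl
  have hE1 : ∀ x : H₁, (A ((inlK x : WithLp 2 (H₁ × H₂)))).fst = 0 := by
    have h0 : (pmap (1 : H₁ →L[ℂ] H₁) (0 : H₂ →L[ℂ] H₂)).comp
        (A.comp (pmap (1 : H₁ →L[ℂ] H₁) (0 : H₂ →L[ℂ] H₂))) - 0 = 0 := by
      apply key
      · refine psub _ _ ?_ ?_
        · intro g w
          simp only [ContinuousLinearMap.comp_apply]
          rw [hEπ1 g w, hAcomm' g, hEπ1 g]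
        · intro g w
          simp only [ContinuousLinearMap.zero_apply, map_zero]
      · intro x hx
        obtain ⟨hx1, hx2⟩ := (hmemUp x).1 hx
        have hEmem : pmap (1 : H₁ →L[ℂ] H₁) (0 : H₂ →L[ℂ] H₂) x ∈ fixedPts Up :=
          (hmemUp _).2 ⟨hx1, (fixedPts U₂).zero_mem⟩
        simp only [ContinuousLinearMap.sub_apply, ContinuousLinearMap.comp_apply,
          ContinuousLinearMap.zero_apply, sub_zero]
        rw [hAB _ hEmem]
        apply k2_ext
        · show ((V.symm (Submodule.orthogonalProjectionOnto (fixedPts U₂) (0 : H₂)) : fixedPts U₁) : H₁)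
            = (0 : H₁)
          rw [map_zero, map_zero, Submodule.coe_zero]
        · rfl
    intro x
    have h1 := ContinuousLinearMap.ext_iff.1 h0 (inlK x)
    have h3 : pmap (1 : H₁ →L[ℂ] H₁) (0 : H₂ →L[ℂ] H₂) (inlK x)
        = (inlK x : WithLp 2 (H₁ × H₂)) := k2_ext rfl rfl
    simp only [ContinuousLinearMap.sub_apply, ContinuousLinearMap.comp_apply,
      ContinuousLinearMap.zero_apply, sub_zero, h3] at h1
    exact congrArg WithLp.fst h1
  have hE2 : ∀ y : H₂, (A ((inrK y : WithLp 2 (H₁ × H₂)))).snd = 0 := by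
    have h0 : (pmap (0 : H₁ →L[ℂ] H₁) (1 : H₂ →L[ℂ] H₂)).comp
        (A.comp (pmap (0 : H₁ →L[ℂ] H₁) (1 : H₂ →L[ℂ] H₂))) - 0 = 0 := by
      apply key
      · refine psub _ _ ?_ ?_
        · intro g w
          simp only [ContinuousLinearMap.comp_apply]
          rw [hEπ2 g w, hAcomm' g, hEπ2 g]
        · intro g w
          simp only [ContinuousLinearMap.zero_apply, map_zero]
      · intro x hx
        obtain ⟨hx1, hx2⟩ := (hmemUp x).1 hx
        have hEmem : pmap (0 : H₁ →L[ℂ] H₁) (1 : H₂ →L[ℂ] H₂) x ∈ fixedPts Up :=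
          (hmemUp _).2 ⟨(fixedPts U₁).zero_mem, hx2⟩
        simp only [ContinuousLinearMap.sub_apply, ContinuousLinearMap.comp_apply,
          ContinuousLinearMap.zero_apply, sub_zero]
        rw [hAB _ hEmem]
        apply k2_ext
        · rfl
        · show ((V (Submodule.orthogonalProjectionOnto (fixedPts U₁) (0 : H₁)) : fixedPts U₂) : H₂)
            = (0 : H₂)
          rw [map_zero, map_zero, Submodule.coe_zero]
    intro y
    have h1 := ContinuousLinearMap.ext_iff.1 h0 (inrK y)
    have h3 : pmap (0 : H₁ →L[ℂ] H₁) (1 : H₂ →L[ℂ] H₂) (inrK y)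
        = (inrK y : WithLp 2 (H₁ × H₂)) := k2_ext rfl rfl
    simp only [ContinuousLinearMap.sub_apply, ContinuousLinearMap.comp_apply,
      ContinuousLinearMap.zero_apply, sub_zero, h3] at h1
    exact congrArg WithLp.snd h1
  -- the intertwiner
  set T : H₁ →L[ℂ] H₂ := (ContinuousLinearMap.snd ℂ H₁ H₂).comp
    (((WithLp.prodContinuousLinearEquiv 2 ℂ H₁ H₂).toContinuousLinearMap).comp
      (A.comp (inlK : H₁ →L[ℂ] WithLp 2 (H₁ × H₂)))) with hTdef
  have hT_apply : ∀ x : H₁, T x = (A ((inlK x : WithLp 2 (H₁ × H₂)))).snd := fun x => rfl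
  have hT_norm : ∀ x : H₁, ‖T x‖ = ‖x‖ := by
    intro x
    have h1 : (inner ℂ (A ((inlK x : WithLp 2 (H₁ × H₂))))
        (A ((inlK x : WithLp 2 (H₁ × H₂)))) : ℂ) = inner ℂ (T x) (T x) := by
      rw [WithLp.prod_inner_apply, WithLp.ofLp_fst, WithLp.ofLp_snd, hE1 x, inner_zero_left, zero_add, hT_apply]
    have h2 : (inner ℂ ((inlK x : WithLp 2 (H₁ × H₂))) ((inlK x : WithLp 2 (H₁ × H₂))) : ℂ)
        = inner ℂ x x := by
      rw [WithLp.prod_inner_apply]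
      show (inner ℂ x x : ℂ) + inner ℂ (0 : H₂) (0 : H₂) = inner ℂ x x
      rw [inner_zero_left, add_zero]
    refine norm_eq_of_inner_self_eq ?_
    rw [← h1, hAinner, h2]
  have hT_int : ∀ (g : G) (x : H₁), T (π₁ g x) = π₂ g (T x) := by
    intro g x
    have h1 : (inlK (π₁ g x) : WithLp 2 (H₁ × H₂)) = πp g (inlK x) :=
      k2_ext rfl (by show (0 : H₂) = π₂ g (0 : H₂); rw [map_zero])
    show (A ((inlK (π₁ g x) : WithLp 2 (H₁ × H₂)))).snd = π₂ g ((A (inlK x)).snd)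
    rw [h1, hAcomm' g]
    rfl
  have hT_ext : ∀ x : fixedPts U₁, T (x : H₁) = (V x : H₂) := by
    intro x
    have hmem : (inlK (x : H₁) : WithLp 2 (H₁ × H₂)) ∈ fixedPts Up :=
      (hmemUp _).2 ⟨x.2, (fixedPts U₂).zero_mem⟩
    show (A ((inlK (x : H₁) : WithLp 2 (H₁ × H₂)))).snd = (V x : H₂)
    rw [hAB _ hmem, hBsnd]
    have hq : Submodule.orthogonalProjectionOnto (fixedPts U₁) ((inlK (x : H₁) : WithLp 2 (H₁ × H₂)).fst)
        = x := Submodule.orthogonalProjectionOnto_mem_subspace_eq_self x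
    rw [hq]
  have hT_surj : Function.Surjective T := by
    intro y
    refine ⟨(A ((inrK y : WithLp 2 (H₁ × H₂)))).fst, ?_⟩
    have h1 : A (inrK y) = inlK ((A ((inrK y : WithLp 2 (H₁ × H₂)))).fst) :=
      k2_ext rfl (by rw [hE2 y]; rfl)
    have h2 : A ((inlK ((A ((inrK y : WithLp 2 (H₁ × H₂)))).fst) : WithLp 2 (H₁ × H₂)))
        = inrK y := by rw [← h1, hAA]
    show (A ((inlK ((A ((inrK y : WithLp 2 (H₁ × H₂)))).fst) : WithLp 2 (H₁ × H₂)))).snd = y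
    rw [h2]
    exact inrK_snd y
  refine ⟨T, ⟨hT_norm, hT_surj, hT_int, hT_ext⟩, ?_⟩
  intro Φ hΦ
  obtain ⟨hn, hs, hi, he⟩ := hΦ
  refine ext_on_total π₁ U₁ htot1 Φ T ?_
  intro g x hx
  rw [hi g x, hT_int g x]
  have h1 : Φ x = (V ⟨x, hx⟩ : H₂) := he ⟨x, hx⟩
  have h2 : T x = (V ⟨x, hx⟩ : H₂) := hT_ext ⟨x, hx⟩
  rw [h1, h2]
end

section
/- Let (π, H) be a strict ground state representation of (G, α) and let (ρ, F) be a subrepresentation on a closed invariant subspace F that is itself a ground state representation with minimal energy space F⁰ = F ∩ H⁰. Then (ρ, F) is also strict: every bounded operator on F⁰ commuting with ρ⁰(G⁰) extends to a bounded operator on F commuting with ρ(G). -/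
/-- **Subrepresentations of strict ground state representations are strict**
(cf. Prop. 2.13).  Let `(π, H)` be a strict ground state representation of `(G,α)` and
let `(ρ, F)` be the subrepresentation on a closed invariant subspace `F` which is itself
a ground state representation with minimal energy space `F⁰ = F ∩ H⁰`.  Then `(ρ, F)` is
strict: every bounded operator on `F⁰` commuting with `ρ⁰(G⁰)` extends to a bounded
operator on `F` commuting with `ρ(G)`. -/
theorem stmt_11 {G : Type*} [Group G]
    {H : Type*} [NormedAddCommGroup H] [InnerProductSpace ℂ H] [CompleteSpace H]
    (α : ℝ → G → G)
    (π : G → H →L[ℂ] H) (U : ℝ → H →L[ℂ] H)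
    (hgs : IsGroundStateRep α π U) (hstr : IsStrict α π U)
    (F : Submodule ℂ H) (hFclosed : IsClosed (F : Set H))
    (hFπ : ∀ g : G, ∀ x ∈ F, π g x ∈ F)
    (hFU : ∀ t : ℝ, ∀ x ∈ F, U t x ∈ F)
    -- the subrepresentation on `F` is a ground state representation with `F⁰ = F ∩ H⁰`
    (hFtotal : (Submodule.span ℂ {y : H | ∃ (g : G) (x : H),
        x ∈ F ⊓ fixedPts U ∧ y = π g x}).topologicalClosure = F) :
    ∀ B : H →L[ℂ] H,
      (∀ x : H, B x ∈ F ⊓ fixedPts U) →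
      (∀ x ∈ (F ⊓ fixedPts U)ᗮ, B x = 0) →
      (∀ g : G, (∀ t : ℝ, α t g = g) → ∀ x ∈ F ⊓ fixedPts U, B (π g x) = π g (B x)) →
      ∃ A : H →L[ℂ] H,
        (∀ x : H, A x ∈ F) ∧ (∀ x ∈ Fᗮ, A x = 0) ∧
        (∀ g : G, ∀ x ∈ F, A (π g x) = π g (A x)) ∧
        (∀ x ∈ F ⊓ fixedPts U, A x = B x) := by
  intro B hB1 hB2 hB3
  obtain ⟨hπ1, hπmul, hπu, hU0, hUadd, hUu, hUcont, hNN, hcomm, htotal⟩ := hgs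
  -- basic facts
  have hfixedclosed : IsClosed ((fixedPts U : Submodule ℂ H) : Set H) := by
    have : ((fixedPts U : Submodule ℂ H) : Set H) = ⋂ t : ℝ, {x : H | U t x = x} := by
      ext x; simp [fixedPts, Set.mem_iInter]
    rw [this]
    exact isClosed_iInter fun t => isClosed_eq (U t).continuous continuous_id
  have hF0closed : IsClosed ((F ⊓ fixedPts U : Submodule ℂ H) : Set H) := by
    have : ((F ⊓ fixedPts U : Submodule ℂ H) : Set H) = (F : Set H) ∩ (fixedPts U : Set H) := rfl
    rw [this]; exact hFclosed.inter hfixedclosed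
  haveI : CompleteSpace (F ⊓ fixedPts U : Submodule ℂ H) := hF0closed.completeSpace_coe
  haveI : CompleteSpace F := hFclosed.completeSpace_coe
  -- π g⁻¹ is the inverse and adjoint of π g
  have hπinv : ∀ g : G, π g * π g⁻¹ = 1 ∧ π g⁻¹ * π g = 1 := by
    intro g
    constructor
    · rw [← hπmul, mul_inv_cancel, hπ1]
    · rw [← hπmul, inv_mul_cancel, hπ1]
  have hadj : ∀ g : G, ContinuousLinearMap.adjoint (π g) = π g⁻¹ := by
    intro g
    have h1 : ContinuousLinearMap.adjoint (π g) * π g = 1 := by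
      have := (hπu g).1
      rwa [ContinuousLinearMap.star_eq_adjoint] at this
    calc ContinuousLinearMap.adjoint (π g)
        = ContinuousLinearMap.adjoint (π g) * (π g * π g⁻¹) := by rw [(hπinv g).1, mul_one]
      _ = (ContinuousLinearMap.adjoint (π g) * π g) * π g⁻¹ := by rw [mul_assoc]
      _ = π g⁻¹ := by rw [h1, one_mul]
  -- commutation for a fixed g : U t commutes with π g and π g⁻¹
  have hUcommg : ∀ g : G, (∀ t : ℝ, α t g = g) → ∀ t : ℝ, U t * π g = π g * U t := by
    intro g hg t
    rw [hcomm t g, hg t]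
  have hUcommginv : ∀ g : G, (∀ t : ℝ, α t g = g) → ∀ t : ℝ, U t * π g⁻¹ = π g⁻¹ * U t := by
    intro g hg t
    have h := hUcommg g hg t
    calc U t * π g⁻¹ = (π g⁻¹ * π g) * (U t * π g⁻¹) := by rw [(hπinv g).2, one_mul]
      _ = π g⁻¹ * (π g * U t) * π g⁻¹ := by simp only [mul_assoc]
      _ = π g⁻¹ * (U t * π g) * π g⁻¹ := by rw [h]
      _ = π g⁻¹ * U t * (π g * π g⁻¹) := by simp only [mul_assoc]
      _ = π g⁻¹ * U t := by rw [(hπinv g).1, mul_one]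
  -- for fixed g, π g⁻¹ maps F⁰ into F⁰
  have hginvF0 : ∀ g : G, (∀ t : ℝ, α t g = g) → ∀ w ∈ F ⊓ fixedPts U,
      π g⁻¹ w ∈ F ⊓ fixedPts U := by
    intro g hg w hw
    refine ⟨hFπ g⁻¹ w hw.1, ?_⟩
    intro t
    have h := congrArg (fun T : H →L[ℂ] H => T w) (hUcommginv g hg t)
    simp only [ContinuousLinearMap.mul_apply] at h
    rw [h, hw.2 t]
  -- for fixed g, π g maps (F⁰)ᗮ into (F⁰)ᗮ
  have hgperp : ∀ g : G, (∀ t : ℝ, α t g = g) → ∀ z ∈ (F ⊓ fixedPts U)ᗮ,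
      π g z ∈ (F ⊓ fixedPts U)ᗮ := by
    intro g hg z hz
    rw [Submodule.mem_orthogonal]
    intro w hw
    have : (inner ℂ w (π g z) : ℂ) = inner ℂ ((ContinuousLinearMap.adjoint (π g)) w) z :=
      (ContinuousLinearMap.adjoint_inner_left (π g) z w).symm
    rw [this, hadj g]
    exact hz _ (hginvF0 g hg w hw)
  -- apply strictness of (π, H) to B
  obtain ⟨A, hAcomm, hAagree⟩ := hstr B (fun x => (hB1 x).2)
    (fun x hx => hB2 x (Submodule.orthogonal_le inf_le_right hx))
    (by
      intro g hg x hx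
      -- decompose x = y + z with y ∈ F⁰, z ⊥ F⁰
      set y : H := (Submodule.orthogonalProjectionOnto (F ⊓ fixedPts U) x : H) with hy_def
      have hy : y ∈ F ⊓ fixedPts U := (Submodule.orthogonalProjectionOnto (F ⊓ fixedPts U) x).2
      have hz : x - y ∈ (F ⊓ fixedPts U)ᗮ :=
        Submodule.sub_starProjection_mem_orthogonal x
      have hBz : B (x - y) = 0 := hB2 _ hz
      have hBπz : B (π g (x - y)) = 0 := hB2 _ (hgperp g hg _ hz)
      have hx_split : x = y + (x - y) := by abel
      have e1 : B (π g x) = B (π g y) := by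
        conv_lhs => rw [hx_split]
        rw [map_add, map_add, hBπz, add_zero]
      have e2 : B x = B y := by
        conv_lhs => rw [hx_split]
        rw [map_add, hBz, add_zero]
      rw [e1, e2]
      exact hB3 g hg y hy)
  -- A maps F into F
  have hAF : ∀ x ∈ F, A x ∈ F := by
    have key : (Submodule.span ℂ {y : H | ∃ (g : G) (x : H),
        x ∈ F ⊓ fixedPts U ∧ y = π g x}).topologicalClosure
        ≤ F ⊓ Submodule.comap (A : H →ₗ[ℂ] H) F := by
      apply Submodule.topologicalClosure_minimal
      · rw [Submodule.span_le]
        rintro _ ⟨g, x, hx, rfl⟩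
        refine Submodule.mem_inf.2 ⟨hFπ g x hx.1, Submodule.mem_comap.2 ?_⟩
        have h1 : A (π g x) = π g (A x) := by
          have := congrArg (fun T : H →L[ℂ] H => T x) (hAcomm g)
          simpa using this
        have h2 : A x = B x := hAagree x hx.2
        show A (π g x) ∈ F
        rw [h1, h2]
        exact hFπ g (B x) (hB1 x).1
      · show IsClosed ((F : Set H) ∩ (A ⁻¹' (F : Set H)))
        exact hFclosed.inter (hFclosed.preimage A.continuous)
    intro x hx
    rw [← hFtotal] at hx
    exact (Submodule.mem_inf.1 (key hx)).2
  -- the final operator : A composed with the projection onto F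
  refine ⟨A ∘L (F.subtypeL ∘L Submodule.orthogonalProjectionOnto F), ?_, ?_, ?_, ?_⟩
  · intro x
    exact hAF _ (Submodule.orthogonalProjectionOnto F x).2
  · intro x hx
    have : Submodule.orthogonalProjectionOnto F x = 0 :=
      Submodule.orthogonalProjectionOnto_apply_of_mem_orthogonal hx
    simp [this]
  · intro g x hx
    have hPx : (Submodule.orthogonalProjectionOnto F x : H) = x :=
      congrArg Subtype.val (Submodule.orthogonalProjectionOnto_mem_subspace_eq_self (⟨x, hx⟩ : F))
    have hPπx : (Submodule.orthogonalProjectionOnto F (π g x) : H) = π g x :=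
      congrArg Subtype.val (Submodule.orthogonalProjectionOnto_mem_subspace_eq_self (⟨π g x, hFπ g x hx⟩ : F))
    have h1 : A (π g x) = π g (A x) := by
      have := congrArg (fun T : H →L[ℂ] H => T x) (hAcomm g)
      simpa using this
    simp only [ContinuousLinearMap.comp_apply, Submodule.subtypeL_apply]
    rw [hPx, hPπx, h1]
  · intro x hx
    have hPx : (Submodule.orthogonalProjectionOnto F x : H) = x :=
      congrArg Subtype.val (Submodule.orthogonalProjectionOnto_mem_subspace_eq_self (⟨x, hx.1⟩ : F))
    simp only [ContinuousLinearMap.comp_apply, Submodule.subtypeL_apply]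
    rw [hPx]
    exact hAagree x hx.2
end

section
/- Let V be a real vector space of countable dimension equipped with the finest locally convex topology, and let α: ℝ → GL(V) be a group homomorphism such that every orbit map t ↦ α_t(v) is continuous. Then every orbit {α_t(v) : t ∈ ℝ, |t| ≤ 1} is contained in a finite dimensional subspace of V, and there exists a locally finite endomorphism D of V such that α_t = e^{tD} for all t ∈ ℝ; in particular each v ∈ V lies in a finite dimensional α-invariant subspace on which t ↦ α_t is smooth. -/
open Submodule Filter Topology intervalIntegral MeasureTheory

set_option linter.unusedSectionVars false
set_option maxHeartbeats 1000000
set_option synthInstance.maxHeartbeats 400000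

section auxA
variable {V : Type*} [AddCommGroup V] [Module ℝ V]
/-- weighted coordinate seminorm -/
noncomputable def wsn {ι : Type*} (B : Module.Basis ι ℝ V) (c : ι → ℕ) : Seminorm ℝ V :=
  Seminorm.of (fun v => (B.repr v).sum fun b r => (c b : ℝ) * |r|)
    (by
      intro x y
      classical
      rw [map_add]
      have h0 : ∀ b : ι, (c b : ℝ) * |(0:ℝ)| = 0 := by intro b; simp
      rw [Finsupp.sum_of_support_subset _ Finsupp.support_add _ (fun b _ => h0 b),
          Finsupp.sum_of_support_subset _ (Finset.subset_union_left (s₂ := (B.repr y).support)) _ (fun b _ => h0 b),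
          Finsupp.sum_of_support_subset _ (Finset.subset_union_right (s₁ := (B.repr x).support)) _ (fun b _ => h0 b),
          ← Finset.sum_add_distrib]
      apply Finset.sum_le_sum
      intro i _
      have h1 : |(B.repr x) i + (B.repr y) i| ≤ |(B.repr x) i| + |(B.repr y) i| := abs_add_le _ _
      have h2 : (0:ℝ) ≤ c i := Nat.cast_nonneg _
      simp only [Finsupp.add_apply]
      nlinarith)
    (by
      intro a x
      classical
      rw [_root_.map_smul]
      rw [Finsupp.sum_of_support_subset _ Finsupp.support_smul _ (fun b _ => by simp),
          Finsupp.sum, Finset.mul_sum]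
      apply Finset.sum_congr rfl
      intro i _
      simp only [Finsupp.smul_apply, smul_eq_mul, abs_mul, Real.norm_eq_abs]
      ring)

theorem wsn_basis {ι : Type*} (B : Module.Basis ι ℝ V) (c : ι → ℕ) (i : ι) :
    wsn B c (B i) = c i := by
  simp only [wsn, Seminorm.of]
  show ((B.repr (B i)).sum fun b r => (c b : ℝ) * |r|) = c i
  rw [B.repr_self, Finsupp.sum_single_index (by simp)]
  simp


theorem exists_finset_span {s : Set V} (h : FiniteDimensional ℝ (span ℝ s)) :
    ∃ F : Finset V, ↑F ⊆ s ∧ span ℝ (F : Set V) = span ℝ s := by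
  classical
  have hfg : (span ℝ s).FG := Module.Finite.iff_fg.mp h
  have hcpt := (Submodule.fg_iff_compact _).mp hfg
  have hle : span ℝ s ≤ ⨆ x : s, span ℝ {(x : V)} := by
    rw [span_eq_iSup_of_singleton_spans]
    rw [iSup_subtype']
  obtain ⟨F', hF'⟩ := CompleteLattice.IsCompactElement.exists_finset_of_le_iSup _ hcpt _ hle
  refine ⟨F'.image Subtype.val, ?_, le_antisymm ?_ ?_⟩
  · intro x hx
    simp only [Finset.coe_image, Set.mem_image, Finset.mem_coe] at hx
    obtain ⟨y, _, rfl⟩ := hx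
    exact y.2
  · apply span_mono
    intro x hx
    simp only [Finset.coe_image, Set.mem_image, Finset.mem_coe] at hx
    obtain ⟨y, _, rfl⟩ := hx
    exact y.2
  · refine le_trans hF' ?_
    apply iSup₂_le
    intro i hi
    apply span_mono
    intro x hx
    simp only [Set.mem_singleton_iff] at hx
    subst hx
    simp only [Finset.coe_image, Set.mem_image, Finset.mem_coe]
    exact ⟨i, hi, rfl⟩


end auxA

section auxB
variable {V : Type*} [AddCommGroup V] [Module ℝ V] [TopologicalSpace V]
  [IsTopologicalAddGroup V] [ContinuousSMul ℝ V]

theorem t2_of_seminorms (hfinest : ∀ p : Seminorm ℝ V, Continuous p) : T2Space V := by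
  refine ⟨fun a b hab => ?_⟩
  obtain ⟨φ, hφ⟩ : ∃ φ : Module.Dual ℝ V, φ (a - b) ≠ 0 := by
    by_contra h
    push_neg at h
    exact hab (sub_eq_zero.mp ((Module.forall_dual_apply_eq_zero_iff ℝ _).mp h))
  set p : Seminorm ℝ V := (normSeminorm ℝ ℝ).comp φ with hp
  have hpab : 0 < p (a - b) := by
    simpa [hp, Seminorm.comp_apply] using abs_pos.mpr hφ
  refine ⟨{x | p (x - a) < p (a - b) / 2}, {x | p (x - b) < p (a - b) / 2}, ?_, ?_, ?_, ?_, ?_⟩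
  · exact isOpen_Iio.preimage ((hfinest p).comp (continuous_id.sub continuous_const))
  · exact isOpen_Iio.preimage ((hfinest p).comp (continuous_id.sub continuous_const))
  · simp [hpab]
  · simp [hpab]
  · rw [Set.disjoint_left]
    rintro x hx1 hx2
    have h1 : p (a - b) ≤ p (x - a) + p (x - b) := by
      have := map_sub_le_add p (a - x) (b - x)
      simp only [sub_sub_sub_cancel_right] at this
      calc p (a - b) ≤ p (a - x) + p (b - x) := this
        _ = p (x - a) + p (x - b) := by
            rw [← map_neg_eq_map p (a - x), ← map_neg_eq_map p (b - x), neg_sub, neg_sub]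
    simp only [Set.mem_setOf_eq] at hx1 hx2
    linarith

theorem closed_submodule (hfinest : ∀ p : Seminorm ℝ V, Continuous p) (W : Submodule ℝ V) :
    IsClosed (W : Set V) := by
  refine isClosed_of_closure_subset fun x hx => ?_
  by_contra hxW
  obtain ⟨ψ, hψ⟩ : ∃ ψ : Module.Dual ℝ (V ⧸ W), ψ (W.mkQ x) ≠ 0 := by
    by_contra h
    push_neg at h
    exact hxW ((Submodule.Quotient.mk_eq_zero W).mp
      ((Module.forall_dual_apply_eq_zero_iff ℝ _).mp h))
  set φ : Module.Dual ℝ V := ψ.comp W.mkQ with hφdef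
  set p : Seminorm ℝ V := (normSeminorm ℝ ℝ).comp φ with hp
  have hpx : 0 < p x := by simpa [hp, hφdef, Seminorm.comp_apply] using abs_pos.mpr hψ
  have hopen : IsOpen {y | p (y - x) < p x} :=
    isOpen_Iio.preimage ((hfinest p).comp (continuous_id.sub continuous_const))
  obtain ⟨w, hw1, hw2⟩ := (_root_.mem_closure_iff.mp hx) _ hopen (by simp [hpx])
  have hφw : φ w = 0 := by
    simp [hφdef, (Submodule.Quotient.mk_eq_zero W).mpr hw2, show W.mkQ w = 0 from
      (Submodule.Quotient.mk_eq_zero W).mpr hw2]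
  have : p (w - x) = p x := by
    simp [hp, Seminorm.comp_apply, map_sub, hφw]
  simp only [Set.mem_setOf_eq, this] at hw1
  exact lt_irrefl _ hw1


theorem fd_span_of_continuous (hfinest : ∀ p : Seminorm ℝ V, Continuous p) {f : ℝ → V}
    (hf : Continuous f) :
    FiniteDimensional ℝ (span ℝ (f '' Set.Icc (-1:ℝ) 1)) := by
  by_contra hinf
  obtain ⟨s, hsub, hspan, hli⟩ := exists_linearIndependent ℝ (f '' Set.Icc (-1:ℝ) 1)
  have hs_inf : s.Infinite := by
    by_contra hfin
    rw [Set.not_infinite] at hfin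
    rw [← hspan] at hinf
    exact hinf (FiniteDimensional.span_of_finite ℝ hfin)
  let e : ℕ ↪ s := hs_inf.natEmbedding
  have hinj : Function.Injective fun n => ((e n : V)) := fun m n h => e.injective (Subtype.ext h)
  -- the extended basis
  let B := Module.Basis.extend hli
  have hli' : LinearIndepOn ℝ id s := hli
  have hmem : ∀ n : ℕ, (e n : V) ∈ hli'.extend (Set.subset_univ s) :=
    fun n => hli'.subset_extend _ (e n).2
  classical
  let c : hli'.extend (Set.subset_univ s) → ℕ := fun b =>
    if h : ∃ n : ℕ, (e n : V) = (b : V) then h.choose else 0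
  have hc : ∀ n : ℕ, c ⟨e n, hmem n⟩ = n := by
    intro n
    have h : ∃ m : ℕ, (e m : V) = ((e n : V)) := ⟨n, rfl⟩
    simp only [c, dif_pos h]
    exact hinj h.choose_spec
  set p := wsn B c with hpdef
  have hpn : ∀ n : ℕ, p (e n : V) = n := by
    intro n
    have : (e n : V) = B ⟨e n, hmem n⟩ := (Module.Basis.extend_apply_self hli ⟨e n, hmem n⟩).symm
    rw [this, hpdef, wsn_basis, hc]
  -- boundedness on compact
  have hK : IsCompact ((p ∘ f) '' Set.Icc (-1:ℝ) 1) :=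
    isCompact_Icc.image ((hfinest p).comp hf)
  obtain ⟨M, hM⟩ := hK.bddAbove
  obtain ⟨n, hn⟩ := exists_nat_gt M
  have hmemK : (e n : V) ∈ f '' Set.Icc (-1:ℝ) 1 := hsub (e n).2
  obtain ⟨t, ht, hft⟩ := hmemK
  have : p (e n : V) ≤ M := hM ⟨t, ht, by simp [hft]⟩
  rw [hpn n] at this
  linarith


theorem oneParam_exp {A' : Type*} [NormedRing A'] [NormedAlgebra ℝ A'] [CompleteSpace A']
    (m : ℝ → A') (hm : Continuous m) (h0 : m 0 = 1) (hadd : ∀ s t, m (s + t) = m s * m t) :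
    ∃ A : A', ∀ t, m t = NormedSpace.exp (t • A) := by
  have hInt : ∀ a b : ℝ, IntervalIntegrable m volume a b := fun a b => hm.intervalIntegrable a b
  set F : ℝ → A' := fun t => ∫ s in (0:ℝ)..t, m s with hFdef
  have hF : ∀ t, HasDerivAt F (m t) t := fun t =>
    integral_hasDerivAt_right (hInt 0 t)
      (hm.stronglyMeasurableAtFilter _ _) hm.continuousAt
  have hF0 : F 0 = 0 := integral_same
  -- slope tendsto
  have hslope : Tendsto (fun τ : ℝ => τ⁻¹ • F τ) (𝓝[≠] 0) (𝓝 1) := by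
    have := (hasDerivAt_iff_tendsto_slope.mp (hF 0))
    rw [h0] at this
    refine this.congr fun τ => ?_
    simp [slope, hF0]
  obtain ⟨τ, hτball, hτne⟩ : ∃ τ : ℝ, τ⁻¹ • F τ ∈ Metric.ball (1:A') 1 ∧ τ ≠ 0 := by
    have h5 : ∀ᶠ τ in 𝓝[≠] (0:ℝ), τ⁻¹ • F τ ∈ Metric.ball (1:A') 1 :=
      hslope (Metric.ball_mem_nhds 1 one_pos)
    exact (h5.and self_mem_nhdsWithin).exists
  have hu1 : IsUnit (τ⁻¹ • F τ) := by
    have hn : ‖1 - τ⁻¹ • F τ‖ < 1 := by rwa [mem_ball_iff_norm'] at hτball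
    exact sub_sub_self 1 (τ⁻¹ • F τ) ▸ (Units.oneSub _ hn).isUnit
  have hFu : IsUnit (F τ) := by
    have : F τ = (algebraMap ℝ A' τ) * (τ⁻¹ • F τ) := by
      rw [← Algebra.smul_def, smul_smul, mul_inv_cancel₀ hτne, one_smul]
    rw [this]
    exact ((algebraMap ℝ A').isUnit_map (isUnit_iff_ne_zero.mpr hτne)).mul hu1
  obtain ⟨u, hu⟩ := hFu
  have key : ∀ t, m t * F τ = F (t + τ) - F t := by
    intro t
    have h1 : m t * ∫ s in (0:ℝ)..τ, m s = ∫ s in (0:ℝ)..τ, m t * m s :=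
      ((ContinuousLinearMap.mul ℝ A' (m t)).intervalIntegral_comp_comm (hInt 0 τ)).symm
    calc m t * F τ = ∫ s in (0:ℝ)..τ, m t * m s := h1
      _ = ∫ s in (0:ℝ)..τ, m (t + s) := by simp [hadd]
      _ = ∫ s in t..(t+τ), m s := by
          have := integral_comp_add_left (a := (0:ℝ)) (b := τ) m t
          simpa using this
      _ = F (t + τ) - F t := (integral_interval_sub_left (hInt 0 (t+τ)) (hInt 0 t)).symm
  have m_eq : ∀ t, m t = (F (t + τ) - F t) * ↑u⁻¹ := by
    intro t
    have : m t = (m t * F τ) * ↑u⁻¹ := by rw [mul_assoc, ← hu, Units.mul_inv, mul_one]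
    rw [this, key]
  set A : A' := (m τ - 1) * ↑u⁻¹ with hAdef
  have hderiv : ∀ t, HasDerivAt m (m t * A) t := by
    intro t
    have hFt : HasDerivAt (fun t => F (t + τ)) (m (t + τ)) t :=
      HasDerivAt.comp_add_const t τ (hF (t + τ))
    have h1 : HasDerivAt (fun t => (F (t + τ) - F t) * ↑u⁻¹) ((m (t+τ) - m t) * ↑u⁻¹) t :=
      (hFt.sub (hF t)).mul_const _
    have h2 : (fun t => (F (t + τ) - F t) * (↑u⁻¹:A')) = m := funext fun t => (m_eq t).symm
    rw [h2] at h1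
    convert h1 using 1
    rw [hadd t τ, hAdef]
    rw [← mul_assoc, mul_sub, mul_one]
  refine ⟨A, fun t => ?_⟩
  have hN : ∀ s : ℝ, HasDerivAt (fun t => m t * NormedSpace.exp (t • (-A))) 0 s := by
    intro s
    have he : HasDerivAt (fun t : ℝ => NormedSpace.exp (t • (-A)))
        (NormedSpace.exp (s • (-A)) * (-A)) s := hasDerivAt_exp_smul_const (-A) s
    have h := (hderiv s).mul he
    have hc : Commute A (NormedSpace.exp (s • (-A))) :=
      (((Commute.refl A).neg_right).smul_right s).exp_right
    have hz : m s * A * NormedSpace.exp (s • (-A))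
        + m s * (NormedSpace.exp (s • (-A)) * -A) = 0 := by
      rw [mul_assoc, hc.eq]
      noncomm_ring
    rw [hz] at h
    exact h
  have hconst : ∀ x : ℝ, m x * NormedSpace.exp (x • (-A)) = 1 := by
    intro x
    have := is_const_of_deriv_eq_zero (f := fun t => m t * NormedSpace.exp (t • (-A)))
      (fun y => (hN y).differentiableAt) (fun y => (hN y).deriv) x 0
    simpa [h0, NormedSpace.exp_zero] using this
  have hinv : NormedSpace.exp (t • (-A)) * NormedSpace.exp (t • A) = 1 := by
    rw [← NormedSpace.exp_add_of_commute_of_mem_ball (𝕂 := ℝ)]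
    · simp
    · exact (((Commute.refl A).neg_left).smul_left t).smul_right t
    · exact (NormedSpace.expSeries_radius_eq_top ℝ A').symm ▸ edist_lt_top _ _
    · exact (NormedSpace.expSeries_radius_eq_top ℝ A').symm ▸ edist_lt_top _ _
  calc m t = m t * (NormedSpace.exp (t • (-A)) * NormedSpace.exp (t • A)) := by
        rw [hinv, mul_one]
    _ = (m t * NormedSpace.exp (t • (-A))) * NormedSpace.exp (t • A) := by rw [mul_assoc]
    _ = NormedSpace.exp (t • A) := by rw [hconst, one_mul]

theorem key_lemma (hfinest : ∀ p : Seminorm ℝ V, Continuous p)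
    (α : ℝ → V →ₗ[ℝ] V)
    (hα0 : α 0 = LinearMap.id)
    (hαadd : ∀ s t : ℝ, α (s + t) = (α s).comp (α t))
    (hcont : ∀ v : V, Continuous fun t : ℝ => α t v) (v : V) :
    ∃ W : Submodule ℝ V, FiniteDimensional ℝ W ∧ v ∈ W ∧ (∀ t : ℝ, ∀ w ∈ W, α t w ∈ W) ∧
      ∃ B : W →ₗ[ℝ] W,
        (∀ w : W, Tendsto (fun t : ℝ => t⁻¹ • (α t (w:V) - (w:V))) (𝓝[≠] (0:ℝ))
          (𝓝 ((B w : V)))) ∧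
        (∀ (t : ℝ) (w : W), HasSum (fun k : ℕ => (t ^ k / (k.factorial : ℝ)) • (((B ^ k) w : W) : V))
          (α t (w:V))) := by
  classical
  haveI hT2 : T2Space V := t2_of_seminorms hfinest
  set f : ℝ → V := fun t => α t v with hfdef
  have hfc : Continuous f := hcont v
  set W := span ℝ (f '' Set.Icc (-1:ℝ) 1) with hWdef
  have hWfd : FiniteDimensional ℝ W := fd_span_of_continuous hfinest hfc
  have hvW : v ∈ W := subset_span ⟨0, by norm_num, by simp [hfdef, hα0]⟩
  have hIoo : span ℝ (f '' Set.Ioo (-1:ℝ) 1) = W := by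
    refine le_antisymm (span_mono (Set.image_mono Set.Ioo_subset_Icc_self)) ?_
    rw [hWdef, span_le]
    calc f '' Set.Icc (-1:ℝ) 1 = f '' closure (Set.Ioo (-1:ℝ) 1) := by
          rw [closure_Ioo (by norm_num : (-1:ℝ) ≠ 1)]
      _ ⊆ closure (f '' Set.Ioo (-1:ℝ) 1) := image_closure_subset_closure_image hfc
      _ ⊆ closure (span ℝ (f '' Set.Ioo (-1:ℝ) 1) : Set V) := closure_mono subset_span
      _ = (span ℝ (f '' Set.Ioo (-1:ℝ) 1) : Set V) :=
          (closed_submodule hfinest _).closure_eq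
  have hfd' : FiniteDimensional ℝ (span ℝ (f '' Set.Ioo (-1:ℝ) 1)) := by
    rw [hIoo]; exact hWfd
  obtain ⟨F, hFsub, hFspan⟩ := exists_finset_span hfd'
  have hWF : W = span ℝ (F : Set V) := by rw [hFspan, hIoo]
  -- choose times
  have hFt : ∀ y : {y // y ∈ F}, ∃ t, t ∈ Set.Ioo (-1:ℝ) 1 ∧ f t = ↑y := by
    rintro ⟨y, hy⟩
    obtain ⟨t, ht, hft⟩ := hFsub hy
    exact ⟨t, ht, hft⟩
  choose τ hτmem hτeq using hFt
  set Mset : Finset ℝ := insert (0:ℝ) (F.attach.image fun y => |τ y|) with hMset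
  have hMne : Mset.Nonempty := Finset.insert_nonempty _ _
  set M : ℝ := Mset.max' hMne with hMdef
  have hM1 : M < 1 := by
    rw [hMdef]
    apply Finset.max'_lt_iff _ hMne |>.mpr
    intro y hy
    rw [hMset] at hy
    rcases Finset.mem_insert.mp hy with h | h
    · rw [h]; norm_num
    · obtain ⟨z, _, rfl⟩ := Finset.mem_image.mp h
      exact abs_lt.mpr ⟨(hτmem z).1, (hτmem z).2⟩
  have hM0 : 0 ≤ M := Finset.le_max' _ _ (Finset.mem_insert_self _ _)
  set ε : ℝ := 1 - M with hεdef
  have hε0 : 0 < ε := by rw [hεdef]; linarith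
  -- small-time invariance
  have hmaps : ∀ s : ℝ, |s| ≤ ε → ∀ w ∈ W, α s w ∈ W := by
    intro s hs
    have h1 : Submodule.map (α s) W ≤ W := by
      conv_lhs => rw [hWF]
      rw [Submodule.map_span, span_le]
      rintro y ⟨x, hxF, rfl⟩
      have hxF' : x ∈ F := hxF
      have hxτ : f (τ ⟨x, hxF'⟩) = x := hτeq _
      have hαx : α s x = f (s + τ ⟨x, hxF'⟩) := by
        show α s x = α (s + τ ⟨x, hxF'⟩) v
        rw [hαadd, LinearMap.comp_apply]
        congr 1
        exact hxτ.symm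
      have hbound : |s + τ ⟨x, hxF'⟩| ≤ 1 := by
        have h2 : |τ ⟨x, hxF'⟩| ≤ M :=
          Finset.le_max' _ _ (by
            rw [hMset]
            exact Finset.mem_insert_of_mem (Finset.mem_image_of_mem _ (F.mem_attach _)))
        calc |s + τ ⟨x, hxF'⟩| ≤ |s| + |τ ⟨x, hxF'⟩| := abs_add_le _ _
          _ ≤ ε + M := add_le_add hs h2
          _ = 1 := by rw [hεdef]; ring
      have : α s x ∈ W := by
        rw [hαx, hWdef]
        exact subset_span ⟨s + τ ⟨x, hxF'⟩, abs_le.mp hbound, rfl⟩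
      exact this
    intro w hw
    exact h1 ⟨w, hw, rfl⟩
  -- full invariance
  have hinv : ∀ s : ℝ, ∀ w ∈ W, α s w ∈ W := by
    have hstep : ∀ n : ℕ, ∀ s : ℝ, |s| ≤ n * ε → ∀ w ∈ W, α s w ∈ W := by
      intro n
      induction n with
      | zero =>
        intro s hs w hw
        have hs0 : s = 0 := by
          have : |s| ≤ 0 := by simpa using hs
          exact abs_eq_zero.mp (le_antisymm this (abs_nonneg s))
        subst hs0
        rw [hα0]
        exact hw
      | succ n ih =>
        intro s hs w hw
        by_cases hsε : |s| ≤ ε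
        · exact hmaps s hsε w hw
        · push_neg at hsε
          set u : ℝ := ε * (s / |s|) with hu
          have habs : |s| ≠ 0 := fun h => by
            rw [h] at hsε; linarith
          have hus : |u| = ε := by
            rw [hu, abs_mul, abs_div, abs_abs, div_self habs, mul_one, abs_of_pos hε0]
          have h1 : |s - u| ≤ n * ε := by
            have heq : s - u = s * (1 - ε / |s|) := by
              rw [hu]
              field_simp
            have hfrac : 0 ≤ 1 - ε / |s| := by
              have : ε / |s| ≤ 1 := by
                rw [div_le_one (lt_of_le_of_lt (le_of_eq rfl) (lt_of_le_of_lt hε0.le hsε))]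
                exact hsε.le
              linarith
            rw [heq, abs_mul, abs_of_nonneg hfrac]
            have : |s| * (1 - ε / |s|) = |s| - ε := by
              field_simp
            rw [this]
            have : |s| ≤ (n + 1) * ε := by
              push_cast at hs ⊢
              linarith [hs]
            push_cast
            linarith
          have h2 : α ((s - u) + u) w = α (s - u) (α u w) := by
            rw [hαadd]; rfl
          rw [show (s - u) + u = s by ring] at h2
          rw [h2]
          exact ih _ h1 _ (hmaps u hus.le w hw)
    intro s w hw
    obtain ⟨n, hn⟩ := exists_nat_ge (|s| / ε)
    refine hstep n s ?_ w hw
    rw [div_le_iff₀ hε0] at hn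
    linarith
  -- analytic part
  set m0 := Module.finrank ℝ W with hm0def
  set bW : Module.Basis (Fin m0) ℝ W := Module.finBasis ℝ W with hbW
  set e : W ≃ₗ[ℝ] (Fin m0 → ℝ) := bW.equivFun with hedef
  have hres : ∀ t : ℝ, ∀ x : W, α t (x : V) ∈ W := fun t x => hinv t x x.2
  set g : ℝ → (Fin m0 → ℝ) →ₗ[ℝ] (Fin m0 → ℝ) := fun t =>
    (e.toLinearMap ∘ₗ (α t).restrict (fun x hx => hinv t x hx)) ∘ₗ e.symm.toLinearMap with hgdef
  set bE : Module.Basis (Fin m0) ℝ (Fin m0 → ℝ) := Pi.basisFun ℝ (Fin m0) with hbE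
  set Θ : (Fin m0 → (Fin m0 → ℝ)) ≃ₗ[ℝ] ((Fin m0 → ℝ) →L[ℝ] (Fin m0 → ℝ)) :=
    (bE.constr ℝ).trans LinearMap.toContinuousLinearMap with hΘ
  set m : ℝ → (Fin m0 → ℝ) →L[ℝ] (Fin m0 → ℝ) := fun t => Θ (fun i => g t (bE i)) with hmdef
  have hmg : ∀ t : ℝ, (m t : (Fin m0 → ℝ) →ₗ[ℝ] (Fin m0 → ℝ)) = g t := by
    intro t
    apply bE.ext
    intro i
    show (Θ fun i => g t (bE i)) (bE i) = g t (bE i)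
    rw [hΘ]
    simp only [LinearEquiv.trans_apply]
    rw [show ((LinearMap.toContinuousLinearMap ((bE.constr ℝ) fun i => g t (bE i)))
      (bE i)) = ((bE.constr ℝ) fun i => g t (bE i)) (bE i) from rfl]
    rw [Module.Basis.constr_basis]
  have hmapp : ∀ (t : ℝ) (x : Fin m0 → ℝ), m t x = g t x := by
    intro t x
    exact DFunLike.congr_fun (hmg t) x
  have hgc : ∀ x : Fin m0 → ℝ, Continuous fun t => g t x := by
    intro x
    have he : Continuous (e : W → (Fin m0 → ℝ)) :=
      LinearMap.continuous_of_finiteDimensional e.toLinearMap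
    have h1 : Continuous fun t : ℝ => (⟨α t ((e.symm x : W) : V), hres t _⟩ : W) :=
      (hcont _).subtype_mk _
    exact he.comp h1
  have hmc : Continuous m := by
    have hΘc : Continuous Θ := LinearMap.continuous_of_finiteDimensional Θ.toLinearMap
    exact hΘc.comp (continuous_pi fun i => hgc (bE i))
  have hm0 : m 0 = 1 := by
    apply ContinuousLinearMap.ext
    intro x
    rw [hmapp]
    show e ((α 0).restrict _ (e.symm x)) = x
    have : (α 0).restrict (p := W) (q := W) (fun x hx => hinv 0 x hx) (e.symm x) = e.symm x := by
      apply Subtype.ext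
      show α 0 ((e.symm x : W) : V) = _
      rw [hα0]
      rfl
    rw [this, LinearEquiv.apply_symm_apply]
  have hmadd : ∀ s t : ℝ, m (s + t) = m s * m t := by
    intro s t
    apply ContinuousLinearMap.ext
    intro x
    rw [ContinuousLinearMap.mul_apply, hmapp, hmapp, hmapp]
    simp only [hgdef, LinearMap.comp_apply, LinearEquiv.coe_coe, LinearEquiv.symm_apply_apply]
    congr 1
    apply Subtype.ext
    simp only [LinearMap.restrict_coe_apply]
    rw [hαadd]
    rfl
  obtain ⟨A, hA⟩ := oneParam_exp m hmc hm0 hmadd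
  -- the generator on W
  set B : W →ₗ[ℝ] W :=
    { toFun := fun w => e.symm (A (e w))
      map_add' := by intro a b; simp
      map_smul' := by intro c a; simp }
    with hBdef
  have hBk : ∀ (k : ℕ) (w : W), (B ^ k) w = e.symm ((A ^ k) (e w)) := by
    intro k
    induction k with
    | zero => intro w; simp
    | succ k ih =>
      intro w
      rw [pow_succ, Module.End.mul_apply, ih, pow_succ, ContinuousLinearMap.mul_apply]
      show e.symm ((A ^ k) (e (e.symm (A (e w))))) = _
      rw [LinearEquiv.apply_symm_apply]
  refine ⟨W, hWfd, hvW, hinv, B, ?_, ?_⟩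
  · -- derivative property
    intro w
    have hd : HasDerivAt m A 0 := by
      have h1 := hasDerivAt_exp_smul_const (𝕂 := ℝ) A 0
      have h2 : (fun u : ℝ => NormedSpace.exp (u • A)) = m := funext fun u => (hA u).symm
      rw [h2] at h1
      simpa using h1
    have hdx : HasDerivAt (fun t => m t (e w)) (A (e w)) 0 := by
      have := hd.clm_apply (hasDerivAt_const (0:ℝ) (e w))
      simpa [hm0] using this
    have hslope := hasDerivAt_iff_tendsto_slope.mp hdx
    set ι : (Fin m0 → ℝ) →ₗ[ℝ] V := W.subtype ∘ₗ e.symm.toLinearMap with hι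
    have hιc : Continuous ι := LinearMap.continuous_of_finiteDimensional ι
    have hιm : ∀ t : ℝ, ι (m t (e w)) = α t (w : V) := by
      intro t
      rw [hmapp t (e w)]
      show ((e.symm (e ((α t).restrict _ (e.symm (e w))))) : V) = α t (w : V)
      rw [LinearEquiv.symm_apply_apply, LinearEquiv.symm_apply_apply]
      rfl
    have h3 := (hιc.tendsto _).comp hslope
    have h4 : (fun t : ℝ => ι (slope (fun t => m t (e w)) 0 t))
        = fun t : ℝ => t⁻¹ • (α t (w:V) - (w:V)) := by
      funext t
      have hs2 : slope (fun t => m t (e w)) 0 t = t⁻¹ • (m t (e w) - e w) := by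
        rw [slope_def_module, sub_zero, hm0, ContinuousLinearMap.one_apply]
      rw [hs2, LinearMap.map_smul, LinearMap.map_sub, hιm]
      have : ι (e w) = (w : V) := by
        show ((e.symm (e w) : W) : V) = (w : V)
        rw [LinearEquiv.symm_apply_apply]
      rw [this]
    have h5 : ι (A (e w)) = (B w : V) := rfl
    rw [h5] at h3
    refine h3.congr fun t => ?_
    exact congrFun h4 t
  · -- HasSum
    intro t w
    have h1 : HasSum (fun k : ℕ => ((k.factorial : ℝ))⁻¹ • (t • A) ^ k)
        (NormedSpace.exp (t • A)) := NormedSpace.exp_series_hasSum_exp' (t • A)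
    have h2 : HasSum (fun k : ℕ => (t ^ k / (k.factorial : ℝ)) • A ^ k) (m t) := by
      rw [hA t]
      have heq : ∀ k : ℕ, (t ^ k / (k.factorial : ℝ)) • A ^ k
          = ((k.factorial : ℝ))⁻¹ • (t • A) ^ k := by
        intro k
        rw [smul_pow, smul_smul, div_eq_mul_inv, mul_comm]
      simp_rw [heq]
      exact h1
    have h3 : HasSum (fun k : ℕ => (t ^ k / (k.factorial : ℝ)) • ((A ^ k) (e w))) (m t (e w)) := by
      have := (ContinuousLinearMap.apply ℝ (Fin m0 → ℝ) (e w)).hasSum h2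
      simpa using this
    set ι : (Fin m0 → ℝ) →ₗ[ℝ] V := W.subtype ∘ₗ e.symm.toLinearMap with hι
    have hιc : Continuous ι := LinearMap.continuous_of_finiteDimensional ι
    have h4 := h3.map ι.toAddMonoidHom hιc
    simp only [Function.comp_def] at h4
    have h5 : (fun k : ℕ => ι.toAddMonoidHom ((t ^ k / (k.factorial : ℝ)) • ((A ^ k) (e w))))
        = fun k : ℕ => (t ^ k / (k.factorial : ℝ)) • (((B ^ k) w : W) : V) := by
      funext k
      show ι ((t ^ k / (k.factorial : ℝ)) • ((A ^ k) (e w))) = _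
      rw [LinearMap.map_smul, hBk]
      rfl
    have h6 : ι.toAddMonoidHom (m t (e w)) = α t (w : V) := by
      show ι (m t (e w)) = _
      rw [hmapp t (e w)]
      show ((e.symm (e ((α t).restrict _ (e.symm (e w))))) : V) = α t (w : V)
      rw [LinearEquiv.symm_apply_apply, LinearEquiv.symm_apply_apply]
      rfl
    rw [h5, h6] at h4
    exact h4

end auxB




/-- **One-parameter groups on spaces with the finest locally convex topology**
(cf. Prop. D.1).  Let `V` be a real vector space of countable dimension, equipped with
the finest locally convex topology (every seminorm is continuous), and let
`α : ℝ → GL(V)` be a group homomorphism whose orbit maps `t ↦ α_t(v)` are continuous.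
Then every partial orbit `{α_t(v) : |t| ≤ 1}` lies in a finite dimensional subspace,
and there exists a locally finite endomorphism `D` of `V` with `α_t = e^{tD}` for all
`t ∈ ℝ`; in particular every `v ∈ V` lies in a finite dimensional `α`-invariant
subspace. -/
theorem stmt_15 {V : Type*} [AddCommGroup V] [Module ℝ V]
    [TopologicalSpace V] [IsTopologicalAddGroup V] [ContinuousSMul ℝ V]
    -- the finest locally convex topology: every seminorm is continuous
    (hfinest : ∀ p : Seminorm ℝ V, Continuous p)
    -- countable dimension
    (hcount : ∃ s : Set V, s.Countable ∧ Submodule.span ℝ s = ⊤)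
    (α : ℝ → V →ₗ[ℝ] V)
    (hα0 : α 0 = LinearMap.id)
    (hαadd : ∀ s t : ℝ, α (s + t) = (α s).comp (α t))
    (hcont : ∀ v : V, Continuous fun t : ℝ => α t v) :
    -- (i) partial orbits lie in finite dimensional subspaces
    (∀ v : V, ∃ W : Submodule ℝ V, FiniteDimensional ℝ W ∧
      ∀ t : ℝ, |t| ≤ 1 → α t v ∈ W) ∧
    -- (ii) `α_t = e^{tD}` for a locally finite endomorphism `D`
    (∃ D : V →ₗ[ℝ] V,
      (∀ v : V, ∃ W : Submodule ℝ V, FiniteDimensional ℝ W ∧ v ∈ W ∧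
        ∀ w ∈ W, D w ∈ W) ∧
      (∀ (t : ℝ) (v : V),
        HasSum (fun n : ℕ => (t ^ n / (n.factorial : ℝ)) • ((D ^ n) v)) (α t v)) ∧
      -- every `v` lies in a finite dimensional `α`-invariant subspace
      (∀ v : V, ∃ W : Submodule ℝ V, FiniteDimensional ℝ W ∧ v ∈ W ∧
        ∀ (t : ℝ), ∀ w ∈ W, α t w ∈ W)) := by
  classical
  haveI hT2 : T2Space V := t2_of_seminorms hfinest
  have key := fun v : V => key_lemma hfinest α hα0 hαadd hcont v
  set P : V → V → Prop := fun v w =>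
    Tendsto (fun t : ℝ => t⁻¹ • (α t v - v)) (𝓝[≠] (0:ℝ)) (𝓝 w) with hPdef
  have hex : ∀ v, ∃ w, P v w := by
    intro v
    obtain ⟨W, _, hvW, _, B, hPB, _⟩ := key v
    exact ⟨(B ⟨v, hvW⟩ : V), hPB ⟨v, hvW⟩⟩
  have huniq : ∀ v w w', P v w → P v w' → w = w' := fun v w w' h h' =>
    tendsto_nhds_unique h h'
  choose Dfun hD using hex
  have hDadd : ∀ a b : V, Dfun (a + b) = Dfun a + Dfun b := by
    intro a b
    refine huniq _ _ _ (hD (a + b)) ?_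
    have h := (hD a).add (hD b)
    refine h.congr fun t => ?_
    rw [map_add, add_sub_add_comm, smul_add]
  have hDsmul : ∀ (c : ℝ) (a : V), Dfun (c • a) = c • Dfun a := by
    intro c a
    refine huniq _ _ _ (hD (c • a)) ?_
    have h := (hD a).const_smul c
    refine h.congr fun t => ?_
    rw [LinearMap.map_smul, ← smul_sub, smul_comm]
  set D : V →ₗ[ℝ] V := { toFun := Dfun, map_add' := hDadd, map_smul' := hDsmul } with hDdef
  have hDapp : ∀ v, D v = Dfun v := fun v => rfl
  constructor
  · intro v
    obtain ⟨W, hfd, hvW, hinv, _, _, _⟩ := key v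
    exact ⟨W, hfd, fun t _ => hinv t v hvW⟩
  · refine ⟨D, ?_, ?_, ?_⟩
    · intro v
      obtain ⟨W, hfd, hvW, hinv, B, hPB, hSum⟩ := key v
      refine ⟨W, hfd, hvW, fun w hw => ?_⟩
      have : D w = (B ⟨w, hw⟩ : V) := huniq _ _ _ (hD w) (hPB ⟨w, hw⟩)
      rw [this]
      exact (B ⟨w, hw⟩).2
    · intro t v
      obtain ⟨W, hfd, hvW, hinv, B, hPB, hSum⟩ := key v
      have hDW : ∀ w : W, D (w : V) = (B w : V) := fun w =>
        huniq _ _ _ (hD (w : V)) (hPB w)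
      have hpow : ∀ (n : ℕ) (w : W), (D ^ n) (w : V) = ((B ^ n) w : V) := by
        intro n
        induction n with
        | zero => intro w; simp
        | succ n ih =>
          intro w
          rw [pow_succ', pow_succ', Module.End.mul_apply, Module.End.mul_apply, ih w,
            hDW ((B ^ n) w)]
      have h := hSum t ⟨v, hvW⟩
      have hfun : (fun n : ℕ => (t ^ n / (n.factorial : ℝ)) • ((D ^ n) v))
          = fun n : ℕ => (t ^ n / (n.factorial : ℝ)) • (((B ^ n) (⟨v, hvW⟩ : W) : W) : V) := by
        funext n
        show (t ^ n / (n.factorial : ℝ)) • ((D ^ n) (((⟨v, hvW⟩ : W) : W) : V)) = _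
        rw [hpow n ⟨v, hvW⟩]
      rw [hfun]
      exact h
    · intro v
      obtain ⟨W, hfd, hvW, hinv, _, _, _⟩ := key v
      exact ⟨W, hfd, hvW, hinv⟩
end
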